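/- arXiv:1810.03384 — 2 statements merged into one kernel-verified Lean document; each statement's English description precedes it below -/
import Mathlib

section
/- Analysis lemma for families of differential inequalities: Let x₀ > 0, M > 0, and let f_n : [0,x₀] → [0,M] (n ≥ 0) be differentiable functions, each nondecreasing in x, such that the sequence (f_n(x)) converges pointwise on [0,x₀], such that Σ_n(x) := Σ_{k=0}^{n−1} f_k(x) > 0 for all n ≥ 1 and x ∈ [0,x₀], and such that f_n'(x) ≥ (n/Σ_n(x)) f_n(x) for all n ≥ 1 and x ∈ [0,x₀]. Then there exists x₁ ∈ [0,x₀] such that: (P1) for every x ∈ [0,x₁), there exist c_x > 0 and N such that f_n(x) ≤ exp(−c_x n) for all n ≥ N; (P2) for every x ∈ (x₁,x₀], the pointwise limit f(x) := lim_{n→∞} f_n(x) satisfies f(x) ≥ x − x₁. -/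
open Filter Set Finset

private lemma aux_exp_cube (x : ℝ) (hx : 0 ≤ x) : x^3 ≤ 27 * Real.exp x := by
  have h1 : x/3 + 1 ≤ Real.exp (x/3) := Real.add_one_le_exp _
  have h2 : (x/3)^3 ≤ (x/3+1)^3 := by
    apply pow_le_pow_left₀ (by positivity) (by linarith)
  have h3 : (x/3+1)^3 ≤ (Real.exp (x/3))^3 := by
    apply pow_le_pow_left₀ (by positivity) h1
  have h4 : (Real.exp (x/3))^3 = Real.exp x := by
    rw [← Real.exp_nat_mul]; ring_nf
  nlinarith [h2, h3, h4]

private lemma aux_sqrt_tele (n : ℕ) (hn : 1 ≤ n) :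
    ∑ k ∈ Finset.Ico 1 (n+1), 1 / ((k:ℝ) * Real.sqrt k) ≤ 3 - 2 / Real.sqrt n := by
  induction n, hn using Nat.le_induction with
  | base => norm_num
  | succ n hn ih =>
    rw [Finset.sum_Ico_succ_top (by omega)]
    have key : 1 / (((n+1:ℕ):ℝ) * Real.sqrt (n+1:ℕ)) ≤ 2 / Real.sqrt n - 2 / Real.sqrt (n+1:ℕ) := by
      push_cast
      set a := Real.sqrt n with ha
      set b := Real.sqrt ((n:ℝ)+1) with hb
      have ha0' : 0 < a := Real.sqrt_pos.2 (by positivity)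
      have hb0 : 0 < b := Real.sqrt_pos.2 (by positivity)
      have hab : a ≤ b := Real.sqrt_le_sqrt (by linarith)
      have ha2 : a^2 = n := Real.sq_sqrt (by positivity)
      have hb2 : b^2 = (n:ℝ)+1 := Real.sq_sqrt (by positivity)
      rw [div_sub_div _ _ (ne_of_gt ha0') (ne_of_gt hb0), div_le_div_iff₀ (by positivity) (by positivity)]
      have hba : 1 ≤ (b - a) * (2*b) := by
        have h6 : (b-a)*(2*b)*(b+a) = 2*b*(b^2 - a^2) := by ring
        have h7 : b^2 - a^2 = 1 := by rw [ha2, hb2]; ring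
        nlinarith
      calc (1:ℝ) * (a * b) ≤ 1 * (b^2) := by nlinarith
        _ ≤ ((b-a)*(2*b)) * (b^2) := by nlinarith [sq_nonneg b]
        _ = (2*b - a*2) * ((↑n+1) * b) := by rw [← hb2]; ring
    have hs : Real.sqrt ((n+1:ℕ):ℝ) = Real.sqrt ((n:ℝ)+1) := by push_cast; ring_nf
    push_cast at key ⊢
    linarith [ih, key]

private lemma aux_sqrt_sum_le (n : ℕ) :
    ∑ k ∈ Finset.Ico 1 n, 1 / ((k:ℝ) * Real.sqrt k) ≤ 3 := by
  rcases Nat.lt_or_ge n 2 with h | h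
  · interval_cases n <;> simp
  · obtain ⟨m, rfl⟩ : ∃ m, n = m + 1 := ⟨n-1, by omega⟩
    have := aux_sqrt_tele m (by omega)
    have h2 : 0 ≤ 2 / Real.sqrt m := by positivity
    linarith

private lemma aux_exp_sqrt_sum (c : ℝ) (hc : 0 < c) (n : ℕ) :
    ∑ k ∈ Finset.Ico 1 n, Real.exp (-(c * Real.sqrt k)) ≤ 81 / c^3 := by
  have key : ∀ k ∈ Finset.Ico 1 n, Real.exp (-(c * Real.sqrt k)) ≤
      (27/c^3) * (1 / ((k:ℝ) * Real.sqrt k)) := by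
    intro k hk
    simp only [Finset.mem_Ico] at hk
    have hk1 : (1:ℝ) ≤ k := by exact_mod_cast hk.1
    have hsk : 0 < Real.sqrt k := Real.sqrt_pos.2 (by linarith)
    have h1 : (c * Real.sqrt k)^3 ≤ 27 * Real.exp (c * Real.sqrt k) :=
      aux_exp_cube _ (by positivity)
    have hsq : (Real.sqrt k)^2 = k := Real.sq_sqrt (by positivity)
    have h2 : (c*Real.sqrt k)^3 = c^3 * ((k:ℝ)*Real.sqrt k) := by
      have hs3 : Real.sqrt (k:ℝ) ^ 3 = (k:ℝ) * Real.sqrt k := by rw [pow_succ, hsq]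
      rw [mul_pow, hs3]
    have h3 : (27/c^3) * (1 / ((k:ℝ)*Real.sqrt k)) = 27 / (c^3*((k:ℝ)*Real.sqrt k)) := by
      rw [div_mul_div_comm, mul_one]
    rw [h3, Real.exp_neg, inv_eq_one_div,
      div_le_div_iff₀ (Real.exp_pos _) (by positivity)]
    nlinarith [h1, h2]
  calc ∑ k ∈ Finset.Ico 1 n, Real.exp (-(c * Real.sqrt k))
      ≤ ∑ k ∈ Finset.Ico 1 n, (27/c^3) * (1 / ((k:ℝ) * Real.sqrt k)) :=
        Finset.sum_le_sum key
    _ = (27/c^3) * ∑ k ∈ Finset.Ico 1 n, (1 / ((k:ℝ) * Real.sqrt k)) := by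
        rw [Finset.mul_sum]
    _ ≤ (27/c^3) * 3 := by
        apply mul_le_mul_of_nonneg_left (aux_sqrt_sum_le n) (by positivity)
    _ = 81 / c^3 := by ring

private lemma aux_inv_sq_tele (n : ℕ) (hn : 1 ≤ n) :
    ∑ k ∈ Finset.Ico 1 (n+1), 1 / ((k:ℝ)^2) ≤ 2 - 1/(n:ℝ) := by
  induction n, hn using Nat.le_induction with
  | base => norm_num
  | succ n hn ih =>
    rw [Finset.sum_Ico_succ_top (by omega)]
    have hn0 : (0:ℝ) < n := by exact_mod_cast hn
    have key : 1 / (((n+1:ℕ)):ℝ)^2 ≤ 1/(n:ℝ) - 1/((n:ℝ)+1) := by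
      rw [div_sub_div _ _ (ne_of_gt hn0) (by positivity)]
      push_cast
      rw [div_le_div_iff₀ (by positivity) (by positivity)]
      nlinarith
    push_cast at key ⊢
    linarith

private lemma aux_inv_sq_sum (n : ℕ) : ∑ k ∈ Finset.Ico 1 n, 1 / ((k:ℝ)^2) ≤ 2 := by
  rcases Nat.lt_or_ge n 2 with h | h
  · interval_cases n <;> simp
  · obtain ⟨m, rfl⟩ : ∃ m, n = m + 1 := ⟨n-1, by omega⟩
    have := aux_inv_sq_tele m (by omega)
    have h2 : 0 ≤ 1 / (m:ℝ) := by positivity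
    linarith


private lemma aux_gron (F F' : ℝ → ℝ) (lo hi a b lam : ℝ)
    (hla : lo ≤ a) (hab : a ≤ b) (hbh : b ≤ hi)
    (hd : ∀ t ∈ Set.Icc lo hi, HasDerivWithinAt F (F' t) (Set.Icc lo hi) t)
    (hge : ∀ t ∈ Set.Icc a b, lam * F t ≤ F' t) :
    F a * Real.exp (lam * (b - a)) ≤ F b := by
  set g : ℝ → ℝ := fun t => F t * Real.exp (-(lam * t)) with hg
  have hsub : Set.Icc a b ⊆ Set.Icc lo hi := Set.Icc_subset_Icc hla hbh
  have hcontF : ContinuousOn F (Set.Icc lo hi) := fun t ht =>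
    (hd t ht).continuousWithinAt
  have hderivAt : ∀ t ∈ Set.Ioo a b, HasDerivAt g
      ((F' t - lam * F t) * Real.exp (-(lam * t))) t := by
    intro t ht
    have htio : t ∈ Set.Ioo lo hi := ⟨lt_of_le_of_lt hla ht.1, lt_of_lt_of_le ht.2 hbh⟩
    have hFt : HasDerivAt F (F' t) t := by
      apply (hd t (Set.mem_Icc.2 ⟨le_of_lt htio.1, le_of_lt htio.2⟩)).hasDerivAt
      exact Icc_mem_nhds htio.1 htio.2
    have hexp : HasDerivAt (fun t : ℝ => Real.exp (-(lam * t))) 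
        (Real.exp (-(lam * t)) * (-lam)) t := by
      have hlin : HasDerivAt (fun t : ℝ => -(lam * t)) (-lam) t := by
        have h := ((hasDerivAt_id t).const_mul lam).neg
        exact h.congr_deriv (by ring)
      exact hlin.exp
    have := hFt.mul hexp
    exact this.congr_deriv (by ring)
  have hmono : MonotoneOn g (Set.Icc a b) := by
    apply monotoneOn_of_deriv_nonneg (convex_Icc a b)
    · apply ContinuousOn.mul (hcontF.mono hsub)
      exact (Real.continuous_exp.comp (by continuity)).continuousOn
    · intro t ht
      rw [interior_Icc] at ht
      exact (hderivAt t ht).differentiableAt.differentiableWithinAt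
    · intro t ht
      rw [interior_Icc] at ht
      rw [(hderivAt t ht).deriv]
      have h1 : 0 ≤ F' t - lam * F t := by
        have := hge t (Set.mem_Icc.2 ⟨le_of_lt ht.1, le_of_lt ht.2⟩)
        linarith
      positivity
  have hab' := hmono (Set.left_mem_Icc.2 hab) (Set.right_mem_Icc.2 hab) hab
  have key : F a * Real.exp (-(lam * a)) * Real.exp (lam * b)
      ≤ F b * Real.exp (-(lam * b)) * Real.exp (lam * b) :=
    mul_le_mul_of_nonneg_right hab' (Real.exp_pos _).le
  rw [mul_assoc, mul_assoc, ← Real.exp_add, ← Real.exp_add] at key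
  simpa [show -(lam*a) + lam*b = lam * (b-a) by ring] using key


private lemma aux_const (M η : ℝ) (hM : 0 < M) (hη : 0 < η) :
    ∃ C : ℝ, 1 ≤ C ∧ ∀ i : ℕ,
      M * Real.exp (-(η/2^i * (C*4^i))) ≤ 1/(2*(C*4^(i+1))) := by
  set a := max 0 (Real.log (8*M)) with hadef
  set b := max 0 (Real.log (2/η)) with hbdef
  set X := (2/η)*(a + b + 2) with hXdef
  have ha0 : 0 ≤ a := le_max_left _ _
  have hb0 : 0 ≤ b := le_max_left _ _
  refine ⟨max 1 X, le_max_left _ _, fun i => ?_⟩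
  set C := max 1 X with hCdef
  have hC1 : (1:ℝ) ≤ C := le_max_left _ _
  have hC0 : (0:ℝ) < C := by linarith
  have hPX : η * C ≥ 2*a + 2*b + 4 := by
    have : η * X = 2*a + 2*b + 4 := by
      rw [hXdef]; field_simp; ring
    have h2 : X ≤ C := le_max_right _ _
    nlinarith
  -- exponent simplification
  have h4i : (4:ℝ)^i = 2^i * 2^i := by rw [← mul_pow]; norm_num
  have hQ0 : (0:ℝ) < 2^i := by positivity
  have hexparg : η/2^i * (C*4^i) = (η*C)*2^i := by
    rw [h4i]; field_simp
  -- the log inequality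
  have hQ1 : (1:ℝ) ≤ 2^i := one_le_pow₀ (by norm_num)
  have hQi : (i:ℝ) + 1 ≤ 2^i := by
    have := i.lt_two_pow_self
    exact_mod_cast Nat.succ_le_of_lt this
  have hlog2M : Real.log (8*M) ≤ a := le_max_right _ _
  have hlogC : Real.log C ≤ η*C/2 - 1 + b := by
    have hCeq : C = (η*C/2) * (2/η) := by field_simp
    have h1 : Real.log C = Real.log (η*C/2) + Real.log (2/η) := by
      rw [hCeq, Real.log_mul (by positivity) (by positivity)]
      rw [← hCeq]
    have h2 : Real.log (η*C/2) ≤ η*C/2 - 1 := Real.log_le_sub_one_of_pos (by positivity)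
    have h3 : Real.log (2/η) ≤ b := le_max_right _ _
    linarith
  have hlog4 : Real.log 4 ≤ 2 := by
    have h4 : (4:ℝ) = 2*2 := by norm_num
    have := Real.log_two_lt_d9
    rw [h4, Real.log_mul (by norm_num) (by norm_num)]
    linarith
  have hmain : Real.log (8*M*C*4^i) ≤ (η*C)*2^i := by
    rw [Real.log_mul (by positivity) (by positivity),
        Real.log_mul (by positivity) (ne_of_gt hC0), Real.log_pow]
    have e1 : (a+b+2)*(2^i) ≤ (η*C/2)*(2^i) := by
      apply mul_le_mul_of_nonneg_right _ (le_of_lt hQ0)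
      linarith
    have e2 : (a+b)*1 ≤ (a+b)*(2^i) := by
      apply mul_le_mul_of_nonneg_left hQ1 (by linarith)
    have e3 : 0 ≤ (η*C/2)*(2^i - 1) := by
      apply mul_nonneg (by nlinarith) (by linarith)
    have e4 : (i:ℝ)*Real.log 4 ≤ 2*i := by
      have : (0:ℝ) ≤ (i:ℝ) := Nat.cast_nonneg _
      nlinarith
    nlinarith [e1, e2, e3, e4]
  -- conclude
  have hpos : (0:ℝ) < 2*(C*4^(i+1)) := by positivity
  rw [Real.exp_neg, hexparg, inv_eq_one_div, mul_one_div,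
      div_le_div_iff₀ (Real.exp_pos _) hpos]
  have hfin : 8*M*C*4^i ≤ Real.exp ((η*C)*2^i) :=
    (Real.log_le_iff_le_exp (by positivity)).1 hmain
  have heq : M * (2*(C*4^(i+1))) = 8*M*C*4^i := by ring
  linarith


set_option maxHeartbeats 1000000 in
private lemma aux_crux (M : ℝ) (hM : 0 < M) (f : ℕ → ℝ → ℝ) (x v : ℝ) (hxv : x < v)
    (S : ℕ → ℝ → ℝ) (hSdef : ∀ n t, S n t = ∑ k ∈ Finset.range n, f k t)
    (hf0 : ∀ k, ∀ t ∈ Set.Icc x v, 0 ≤ f k t)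
    (hfM : ∀ k, ∀ t ∈ Set.Icc x v, f k t ≤ M)
    (hmono : ∀ k, MonotoneOn (f k) (Set.Icc x v))
    (hSpos : ∀ k, 1 ≤ k → 0 < S k v)
    (hgrw : ∀ k : ℕ, 1 ≤ k → ∀ u w, u ∈ Set.Icc x v → w ∈ Set.Icc x v → u ≤ w →
        ∀ G : ℝ, 0 < G → S k w ≤ G → f k u ≤ M * Real.exp (-((k:ℝ)/G * (w-u))))
    (hslow : Filter.Tendsto (fun k => S k v / k) Filter.atTop (nhds 0)) :
    ∃ w, x < w ∧ w < v ∧ ∃ C : ℝ, 0 < C ∧ ∀ n, S n w ≤ C := by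
  classical
  obtain ⟨η, hη, hx2η, hηeq⟩ : ∃ η : ℝ, 0 < η ∧ x ≤ v - 2*η ∧ η = (v-x)/4 :=
    ⟨(v-x)/4, by linarith, by linarith, rfl⟩
  -- the points
  obtain ⟨tpt, htpt0, htptI, htptgap, htptmono, htptlb⟩ :
      ∃ tpt : ℕ → ℝ, tpt 0 = v ∧ (∀ i, tpt i ∈ Set.Icc x v) ∧
        (∀ i, tpt i - tpt (i+1) = η/2^i) ∧ (∀ i, tpt (i+1) ≤ tpt i) ∧
        (∀ i, v - 2*η ≤ tpt i) := by
    refine ⟨fun i => v - 2*η + 2*η/2^i, by norm_num, fun i => ⟨?_, ?_⟩, fun i => ?_, fun i => ?_, fun i => ?_⟩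
    · have : (0:ℝ) < 2*η/2^i := by positivity
      linarith
    · have h1 : (2:ℝ)*η/2^i ≤ 2*η := by
        rw [div_le_iff₀ (by positivity)]
        nlinarith [one_le_pow₀ (show (1:ℝ) ≤ 2 by norm_num) (n := i)]
      linarith
    · show (v - 2*η + 2*η/2^i) - (v - 2*η + 2*η/2^(i+1)) = η/2^i
      have h2 : (2:ℝ)^(i+1) = 2*2^i := by rw [pow_succ]; ring
      rw [h2]
      have h3 : (2:ℝ)^i ≠ 0 := by positivity
      field_simp
      ring
    · show (v - 2*η + 2*η/2^(i+1)) ≤ (v - 2*η + 2*η/2^i)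
      have h2 : (2:ℝ)^(i+1) = 2*2^i := by rw [pow_succ]; ring
      rw [h2]
      have h4 : (2:ℝ)*η/(2*2^i) ≤ 2*η/2^i := by
        apply div_le_div_of_nonneg_left (by positivity) (by positivity)
        nlinarith [one_le_pow₀ (show (1:ℝ) ≤ 2 by norm_num) (n := i)]
      linarith
    · have : (0:ℝ) < 2*η/2^i := by positivity
      linarith
  -- the bounding sequences
  set g : ℕ → ℕ → ℝ := fun i => i.rec (fun k => S k v)
    (fun i gi => fun n => M + ∑ k ∈ Finset.Ico 1 n, M * Real.exp (-(η / 2 ^ i * k / gi k)))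
    with hgdef
  have hg0 : ∀ k, g 0 k = S k v := fun k => rfl
  have hgs : ∀ i n, g (i+1) n =
      M + ∑ k ∈ Finset.Ico 1 n, M * Real.exp (-(η / 2 ^ i * k / g i k)) := fun i n => rfl
  have hgpos : ∀ i k, 1 ≤ k → 0 < g i k := by
    intro i
    induction i with
    | zero => intro k hk; rw [hg0]; exact hSpos k hk
    | succ i ih =>
      intro k hk
      rw [hgs]
      have : 0 ≤ ∑ k' ∈ Finset.Ico 1 k, M * Real.exp (-(η / 2 ^ i * k' / g i k')) := by
        apply Finset.sum_nonneg
        intro k' _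
        positivity
      linarith
  -- monotonicity of S in the space variable
  have hSmonox : ∀ n, ∀ s ∈ Set.Icc x v, ∀ t ∈ Set.Icc x v, s ≤ t → S n s ≤ S n t := by
    intro n s hs t ht hst
    rw [hSdef, hSdef]
    exact Finset.sum_le_sum fun k _ => hmono k hs ht hst
  -- validity of the bounds
  have hval : ∀ i n, S n (tpt i) ≤ g i n := by
    intro i
    induction i with
    | zero => intro n; rw [hg0, htpt0]
    | succ i ih =>
      intro n
      rw [hgs, hSdef]
      rcases Nat.eq_zero_or_pos n with rfl | hn
      · simp only [Finset.range_zero, Finset.sum_empty]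
        have : 0 ≤ ∑ k ∈ Finset.Ico 1 0, M * Real.exp (-(η / 2 ^ i * k / g i k)) := by
          apply Finset.sum_nonneg; intro k' _; positivity
        linarith
      · have hsplit : ∑ k ∈ Finset.range n, f k (tpt (i+1)) =
            f 0 (tpt (i+1)) + ∑ k ∈ Finset.Ico 1 n, f k (tpt (i+1)) := by
          rw [Finset.range_eq_Ico, ← Finset.sum_Ico_consecutive _ (Nat.zero_le 1) hn]
          congr 1
          rw [show Finset.Ico 0 1 = Finset.range 1 from rfl, Finset.sum_range_one]
        rw [hsplit]
        have h1 : f 0 (tpt (i+1)) ≤ M := hfM 0 _ (htptI (i+1))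
        have h2 : ∀ k ∈ Finset.Ico 1 n, f k (tpt (i+1)) ≤
            M * Real.exp (-(η / 2 ^ i * k / g i k)) := by
          intro k hk
          simp only [Finset.mem_Ico] at hk
          have hgk := hgpos i k hk.1
          have hb := hgrw k hk.1 (tpt (i+1)) (tpt i) (htptI (i+1)) (htptI i) (htptmono i)
            (g i k) hgk (ih k)
          have heq : ((k:ℝ)/(g i k) * (tpt i - tpt (i+1))) = η / 2 ^ i * k / g i k := by
            rw [htptgap i]
            field_simp
          rw [heq] at hb
          exact hb
        exact add_le_add h1 (Finset.sum_le_sum h2)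
  -- constants
  obtain ⟨K, hK0, hK2M⟩ : ∃ K : ℝ, 0 < K ∧ 2*M ≤ K := ⟨3*M+3, by linarith, by linarith⟩
  obtain ⟨D, hD0, hDeq⟩ : ∃ D : ℝ, 0 < D ∧ D = 81*K^3/η^3 := ⟨_, by positivity, rfl⟩
  obtain ⟨C, hC1, hCexp⟩ := aux_const M η hM hη
  have hC0 : (0:ℝ) < C := by linarith
  -- the base threshold
  have hev : ∀ᶠ k : ℕ in Filter.atTop, S k v / k < 1/C :=
    hslow.eventually (gt_mem_nhds (by positivity))
  obtain ⟨N₀, hN₀⟩ := Filter.eventually_atTop.1 hev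
  -- the threshold sequence
  set N : ℕ → ℕ := fun i => i.rec (max N₀ 16)
    (fun i Ni => Ni + 16 + Nat.ceil ((2*M*(1+(Ni:ℝ)+D*8^i)/K)^2)) with hNdef
  have hN0 : N 0 = max N₀ 16 := rfl
  have hNs : ∀ i, N (i+1) = N i + 16 + Nat.ceil ((2*M*(1+(N i:ℝ)+D*8^i)/K)^2) :=
    fun i => rfl
  have hN16 : ∀ i, 16 ≤ N i := by
    intro i
    induction i with
    | zero => rw [hN0]; exact le_max_right _ _
    | succ i ih => rw [hNs]; omega
  have hNgei : ∀ i, i ≤ N i := by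
    intro i
    induction i with
    | zero => exact Nat.zero_le _
    | succ i ih => rw [hNs]; omega
  -- the main estimate, by induction on i
  have cP : ∀ i n, N i ≤ n → g i n ≤ max (K*Real.sqrt n) ((n:ℝ)/(C*4^i)) := by
    intro i
    induction i with
    | zero =>
      intro n hn
      rw [hg0]
      have hn16 : 16 ≤ n := le_trans (by rw [hN0]; exact le_max_right _ _) hn
      have hnN₀ : N₀ ≤ n := le_trans (by rw [hN0]; exact le_max_left _ _) hn
      have hnpos : (0:ℝ) < n := by
        have : (16:ℝ) ≤ n := by exact_mod_cast hn16
        linarith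
      have h1 : S n v / n < 1/C := hN₀ n hnN₀
      have h2 : S n v ≤ (n:ℝ)/C := by
        rw [div_lt_iff₀ hnpos] at h1
        have h2' : (n:ℝ)/C = 1/C * n := by ring
        linarith
      have h3 : (n:ℝ)/(C*4^0) = (n:ℝ)/C := by norm_num
      rw [h3]
      exact le_trans h2 (le_max_right _ _)
    | succ i ih =>
      intro n hn
      rw [hgs]
      have hNin : N i ≤ n := by
        have := hNs i
        omega
      have h1Ni : 1 ≤ N i := le_trans (by norm_num) (hN16 i)
      -- split the sum
      rw [← Finset.sum_Ico_consecutive _ (h1Ni) hNin]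
      -- part 1
      have hpart1 : ∑ k ∈ Finset.Ico 1 (N i), M * Real.exp (-(η / 2 ^ i * k / g i k))
          ≤ (N i : ℝ) * M := by
        calc ∑ k ∈ Finset.Ico 1 (N i), M * Real.exp (-(η / 2 ^ i * k / g i k))
            ≤ ∑ k ∈ Finset.Ico 1 (N i), M := by
              apply Finset.sum_le_sum
              intro k hk
              simp only [Finset.mem_Ico] at hk
              have hgk := hgpos i k hk.1
              have hexp1 : Real.exp (-(η / 2 ^ i * k / g i k)) ≤ 1 := by
                apply Real.exp_le_one_iff.2
                have : (0:ℝ) ≤ η / 2 ^ i * k / g i k := by positivity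
                linarith
              nlinarith
          _ = ((N i - 1 : ℕ) : ℝ) * M := by
              rw [Finset.sum_const, Nat.card_Ico, nsmul_eq_mul]
          _ ≤ (N i : ℝ) * M := by
              apply mul_le_mul_of_nonneg_right _ hM.le
              exact_mod_cast Nat.sub_le _ _
      -- part 2
      have hpart2 : ∑ k ∈ Finset.Ico (N i) n, M * Real.exp (-(η / 2 ^ i * k / g i k))
          ≤ M * (D*8^i) + (n:ℝ)/(2*(C*4^(i+1))) := by
        have hterm : ∀ k ∈ Finset.Ico (N i) n,
            M * Real.exp (-(η / 2 ^ i * k / g i k)) ≤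
            M * Real.exp (-(η/(2^i*K) * Real.sqrt k)) + M * Real.exp (-(η/2^i*(C*4^i))) := by
          intro k hk
          simp only [Finset.mem_Ico] at hk
          have hk1 : 1 ≤ k := le_trans h1Ni hk.1
          have hk1' : (1:ℝ) ≤ k := by exact_mod_cast hk1
          have hkpos : (0:ℝ) < k := by linarith
          have hgk := hgpos i k hk1
          have hsk : (0:ℝ) < Real.sqrt k := Real.sqrt_pos.2 hkpos
          have hgb := ih k hk.1
          rcases max_cases (K*Real.sqrt k) ((k:ℝ)/(C*4^i)) with ⟨hmeq, _⟩ | ⟨hmeq, _⟩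
          · rw [hmeq] at hgb
            have harg : η/(2^i*K) * Real.sqrt k ≤ η / 2 ^ i * k / g i k := by
              have hkg : (k:ℝ)/(K*Real.sqrt k) ≤ k/(g i k) := by
                apply div_le_div_of_nonneg_left hkpos.le hgk hgb
              have heq : (k:ℝ)/(K*Real.sqrt k) = Real.sqrt k / K := by
                rw [div_eq_div_iff (by positivity) (by positivity)]
                linear_combination (-K) * (Real.sq_sqrt hkpos.le)
              rw [heq] at hkg
              calc η/(2^i*K) * Real.sqrt k = (η/2^i) * (Real.sqrt k / K) := by
                    field_simp
                _ ≤ (η/2^i) * ((k:ℝ)/(g i k)) := by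
                    apply mul_le_mul_of_nonneg_left hkg (by positivity)
                _ = η / 2 ^ i * k / g i k := by ring
            have h5 : Real.exp (-(η / 2 ^ i * k / g i k)) ≤
                Real.exp (-(η/(2^i*K) * Real.sqrt k)) := by
              apply Real.exp_le_exp.2
              linarith
            nlinarith [Real.exp_pos (-(η/2^i*(C*4^i))), h5]
          · rw [hmeq] at hgb
            have harg : η/2^i*(C*4^i) ≤ η / 2 ^ i * k / g i k := by
              have hkg : (C*4^i) ≤ k/(g i k) := by
                have h6 : (k:ℝ)/((k:ℝ)/(C*4^i)) ≤ k/(g i k) := by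
                  apply div_le_div_of_nonneg_left hkpos.le hgk hgb
                have h7 : (k:ℝ)/((k:ℝ)/(C*4^i)) = C*4^i := by
                  field_simp
                linarith [h6, h7.symm.le]
              calc η/2^i*(C*4^i) ≤ η/2^i * (k/(g i k)) := by
                    apply mul_le_mul_of_nonneg_left hkg (by positivity)
                _ = η / 2 ^ i * k / g i k := by ring
            have h5 : Real.exp (-(η / 2 ^ i * k / g i k)) ≤
                Real.exp (-(η/2^i*(C*4^i))) := by
              apply Real.exp_le_exp.2
              linarith
            nlinarith [Real.exp_pos (-(η/(2^i*K) * Real.sqrt k)), h5]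
        calc ∑ k ∈ Finset.Ico (N i) n, M * Real.exp (-(η / 2 ^ i * k / g i k))
            ≤ ∑ k ∈ Finset.Ico (N i) n,
              (M * Real.exp (-(η/(2^i*K) * Real.sqrt k)) + M * Real.exp (-(η/2^i*(C*4^i)))) :=
              Finset.sum_le_sum hterm
          _ = (∑ k ∈ Finset.Ico (N i) n, M * Real.exp (-(η/(2^i*K) * Real.sqrt k)))
              + (∑ k ∈ Finset.Ico (N i) n, M * Real.exp (-(η/2^i*(C*4^i)))) := by
              rw [Finset.sum_add_distrib]
          _ ≤ M * (D*8^i) + (n:ℝ)/(2*(C*4^(i+1))) := by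
              apply add_le_add
              · have hsub : Finset.Ico (N i) n ⊆ Finset.Ico 1 n :=
                  Finset.Ico_subset_Ico h1Ni (le_refl n)
                calc ∑ k ∈ Finset.Ico (N i) n, M * Real.exp (-(η/(2^i*K) * Real.sqrt k))
                    ≤ ∑ k ∈ Finset.Ico 1 n, M * Real.exp (-(η/(2^i*K) * Real.sqrt k)) := by
                      apply Finset.sum_le_sum_of_subset_of_nonneg hsub
                      intro k _ _
                      positivity
                  _ = M * ∑ k ∈ Finset.Ico 1 n, Real.exp (-(η/(2^i*K) * Real.sqrt k)) := by
                      rw [Finset.mul_sum]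
                  _ ≤ M * (81/(η/(2^i*K))^3) := by
                      apply mul_le_mul_of_nonneg_left _ hM.le
                      exact aux_exp_sqrt_sum _ (by positivity) n
                  _ = M * (D*8^i) := by
                      congr 1
                      have h8 : ((2:ℝ)^i)^3 = 8^i := by
                        rw [← pow_mul, mul_comm i 3, pow_mul]; norm_num
                      rw [hDeq, div_pow, div_div_eq_mul_div, mul_pow, h8]
                      ring
              · calc ∑ k ∈ Finset.Ico (N i) n, M * Real.exp (-(η/2^i*(C*4^i)))
                    = ((Finset.Ico (N i) n).card : ℝ) * (M * Real.exp (-(η/2^i*(C*4^i)))) := by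
                      rw [Finset.sum_const, nsmul_eq_mul]
                  _ ≤ (n:ℝ) * (1/(2*(C*4^(i+1)))) := by
                      apply mul_le_mul
                      · rw [Nat.card_Ico]
                        exact_mod_cast Nat.sub_le _ _
                      · exact hCexp i
                      · positivity
                      · positivity
                  _ = (n:ℝ)/(2*(C*4^(i+1))) := by ring
      -- combine
      have hsqn : 2*M*(1+(N i:ℝ)+D*8^i)/K ≤ Real.sqrt n := by
        have hcl : ((2*M*(1+(N i:ℝ)+D*8^i)/K)^2) ≤ (n:ℝ) := by
          have h9 : (Nat.ceil ((2*M*(1+(N i:ℝ)+D*8^i)/K)^2) : ℝ) ≤ n := by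
            have h10 : Nat.ceil ((2*M*(1+(N i:ℝ)+D*8^i)/K)^2) ≤ n := by
              have := hNs i
              omega
            exact_mod_cast h10
          exact le_trans (Nat.le_ceil _) h9
        calc 2*M*(1+(N i:ℝ)+D*8^i)/K = Real.sqrt ((2*M*(1+(N i:ℝ)+D*8^i)/K)^2) := by
              rw [Real.sqrt_sq (by positivity)]
          _ ≤ Real.sqrt n := Real.sqrt_le_sqrt hcl
      have hfinal1 : M + (N i:ℝ)*M + M*(D*8^i) ≤ K*Real.sqrt n / 2 := by
        have h12 := mul_le_mul_of_nonneg_left hsqn hK0.le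
        have h13 : K*(2*M*(1+(N i:ℝ)+D*8^i)/K) = 2*M*(1+(N i:ℝ)+D*8^i) := by
          field_simp
        rw [h13] at h12
        linarith
      have hmax : K*Real.sqrt n / 2 + (n:ℝ)/(2*(C*4^(i+1)))
          ≤ max (K*Real.sqrt n) ((n:ℝ)/(C*4^(i+1))) := by
        have e1 : K*Real.sqrt n ≤ max (K*Real.sqrt n) ((n:ℝ)/(C*4^(i+1))) := le_max_left _ _
        have e2 : (n:ℝ)/(C*4^(i+1)) ≤ max (K*Real.sqrt n) ((n:ℝ)/(C*4^(i+1))) := le_max_right _ _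
        have e3 : (n:ℝ)/(2*(C*4^(i+1))) = ((n:ℝ)/(C*4^(i+1)))/2 := by
          rw [div_div]
          ring_nf
        rw [e3]
        linarith
      calc M + ((∑ k ∈ Finset.Ico 1 (N i), M * Real.exp (-(η / 2 ^ i * k / g i k)))
            + ∑ k ∈ Finset.Ico (N i) n, M * Real.exp (-(η / 2 ^ i * k / g i k)))
          ≤ (M + (N i:ℝ)*M) + (M*(D*8^i) + (n:ℝ)/(2*(C*4^(i+1)))) := by
            have := hpart1
            have := hpart2
            linarith
        _ ≤ K*Real.sqrt n / 2 + (n:ℝ)/(2*(C*4^(i+1))) := by linarith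
        _ ≤ max (K*Real.sqrt n) ((n:ℝ)/(C*4^(i+1))) := hmax
  -- the race: N grows at most like a double exponential
  have hR17 : ∀ i, (17:ℝ) ≤ (N i : ℝ) + D*8^i + 1 := by
    intro i
    have h1 : (16:ℝ) ≤ (N i : ℝ) := by exact_mod_cast hN16 i
    have h2 : (0:ℝ) < D*8^i := by positivity
    linarith
  have hRs : ∀ i, (N (i+1) : ℝ) + D*8^(i+1) + 1 ≤ ((N i : ℝ) + D*8^i + 1)^3 := by
    intro i
    set R := (N i : ℝ) + D*8^i + 1 with hRdef
    have hR : (17:ℝ) ≤ R := hR17 i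
    have hz : 2*M*(1+(N i:ℝ)+D*8^i)/K ≤ R := by
      have h1 : 2*M/K ≤ 1 := by
        rw [div_le_one hK0]; linarith
      have h2 : 2*M*(1+(N i:ℝ)+D*8^i)/K = (2*M/K) * R := by
        rw [hRdef]; ring
      rw [h2]
      nlinarith
    have hz0 : 0 ≤ 2*M*(1+(N i:ℝ)+D*8^i)/K := by
      have : (0:ℝ) ≤ (N i : ℝ) := Nat.cast_nonneg _
      have : (0:ℝ) < D*8^i := by positivity
      positivity
    have hceil : (Nat.ceil ((2*M*(1+(N i:ℝ)+D*8^i)/K)^2) : ℝ)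
        ≤ (2*M*(1+(N i:ℝ)+D*8^i)/K)^2 + 1 :=
      (Nat.ceil_lt_add_one (by positivity)).le
    have hcast : (N (i+1) : ℝ) = (N i : ℝ) + 16 + (Nat.ceil ((2*M*(1+(N i:ℝ)+D*8^i)/K)^2) : ℝ) := by
      rw [hNs i]; push_cast; ring
    have hsq : (2*M*(1+(N i:ℝ)+D*8^i)/K)^2 ≤ R^2 := by
      apply pow_le_pow_left₀ hz0 hz
    have h8 : D*8^(i+1) = 8*(D*8^i) := by ring
    have hD8R : D*8^i ≤ R := by
      have : (0:ℝ) ≤ (N i : ℝ) := Nat.cast_nonneg _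
      rw [hRdef]; linarith
    have hNR : (N i : ℝ) ≤ R := by
      have : (0:ℝ) < D*8^i := by positivity
      rw [hRdef]; linarith
    calc (N (i+1) : ℝ) + D*8^(i+1) + 1
        ≤ ((N i : ℝ) + 16 + (R^2 + 1)) + 8*(D*8^i) + 1 := by
          rw [hcast, h8]; linarith
      _ ≤ R^2 + 9*R + 18 := by linarith
      _ ≤ R^3 := by nlinarith
  have hRpow : ∀ i, (N i : ℝ) + D*8^i + 1 ≤ ((N 0 : ℝ) + D + 1)^(3^i) := by
    intro i
    induction i with
    | zero => simp
    | succ i ih =>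
      have hR0 : (0:ℝ) ≤ (N i : ℝ) + D*8^i + 1 := by positivity
      calc (N (i+1) : ℝ) + D*8^(i+1) + 1 ≤ ((N i : ℝ) + D*8^i + 1)^3 := hRs i
        _ ≤ (((N 0 : ℝ) + D + 1)^(3^i))^3 := pow_le_pow_left₀ hR0 ih 3
        _ = ((N 0 : ℝ) + D + 1)^(3^(i+1)) := by
            rw [← pow_mul, pow_succ]
  set R0 := (N 0 : ℝ) + D + 1 with hR0def
  have hR0ge : (17:ℝ) ≤ R0 := by
    have := hR17 0
    simpa using this
  have hlogR0 : 0 ≤ Real.log R0 := Real.log_nonneg (by linarith)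
  -- choose i₀
  obtain ⟨i₀, hi₀⟩ : ∃ i₀ : ℕ, ∀ i, i₀ ≤ i → 3*Real.log R0 * 3^i ≤ (η*C/2) * 4^i := by
    obtain ⟨i₀, hi₀⟩ := exists_nat_ge (18*Real.log R0/(η*C))
    refine ⟨i₀, fun i hi => ?_⟩
    have hiR : 18*Real.log R0/(η*C) ≤ (i:ℝ) := le_trans hi₀ (by exact_mod_cast hi)
    have hηC : 0 < η*C := by positivity
    have h1 : 18*Real.log R0 ≤ (i:ℝ)*(η*C) := by
      rw [div_le_iff₀ hηC] at hiR; linarith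
    have h43 : (1:ℝ) + (i:ℝ)*(1/3) ≤ (4/3)^i := by
      have := one_add_mul_le_pow (show (-2:ℝ) ≤ 1/3 by norm_num) i
      have e : (1:ℝ) + 1/3 = 4/3 := by norm_num
      rw [e] at this
      exact this
    have h2 : 3*Real.log R0 ≤ (η*C/2) * (4/3)^i := by
      have h3 : (η*C/2) * (4/3)^i ≥ (η*C/2) * ((i:ℝ)*(1/3)) := by
        have : (0:ℝ) ≤ (i:ℝ)*(1/3) := by positivity
        nlinarith
      nlinarith
    have h4 : (0:ℝ) < (3:ℝ)^i := by positivity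
    have h5 := mul_le_mul_of_nonneg_right h2 h4.le
    have h6 : (η*C/2) * (4/3)^i * 3^i = (η*C/2) * 4^i := by
      rw [div_pow]
      have h30 : ((3:ℝ))^i ≠ 0 := by positivity
      field_simp
    rw [h6] at h5
    exact h5
  have hrace : ∀ i, i₀ ≤ i → (N (i+1) : ℝ) ≤ Real.exp (η/2 * (C*4^i)) := by
    intro i hi
    have h1 : (N (i+1) : ℝ) ≤ R0^(3^(i+1)) := by
      have h2 := hRpow (i+1)
      have h3 : (0:ℝ) < D*8^(i+1) := by positivity
      linarith
    have h4 : R0^(3^(i+1)) = Real.exp ((3^(i+1) : ℕ) * Real.log R0) := by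
      rw [← Real.log_pow, Real.exp_log (by positivity)]
    have h5 : ((3^(i+1) : ℕ) : ℝ) * Real.log R0 ≤ η/2 * (C*4^i) := by
      have h6 : ((3^(i+1) : ℕ) : ℝ) = 3 * 3^i := by
        push_cast
        rw [pow_succ]; ring
      rw [h6]
      have h7 := hi₀ i hi
      have h8 : 3*3^i*Real.log R0 = 3*Real.log R0 * 3^i := by ring
      have h9 : η/2 * (C*4^i) = (η*C/2) * 4^i := by ring
      rw [h8, h9]
      exact h7
    calc (N (i+1) : ℝ) ≤ R0^(3^(i+1)) := h1
      _ = Real.exp ((3^(i+1) : ℕ) * Real.log R0) := h4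
      _ ≤ Real.exp (η/2 * (C*4^i)) := Real.exp_le_exp.2 h5
  -- covering
  have hcover : ∀ k : ℕ, max (N i₀) 3 ≤ k → ∃ i, N i ≤ k ∧ Real.log k ≤ η/2 * (C*4^i) := by
    intro k hk
    have hNi₀k : N i₀ ≤ k := le_trans (le_max_left _ _) hk
    have hi₀k : i₀ ≤ k := le_trans (hNgei i₀) hNi₀k
    set jm := Nat.findGreatest (fun j => N j ≤ k) k with hjmdef
    have hjm1 : N jm ≤ k := Nat.findGreatest_spec (P := fun j => N j ≤ k) hi₀k hNi₀k
    have hjm2 : i₀ ≤ jm := Nat.le_findGreatest hi₀k hNi₀k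
    have hjm3 : k < N (jm+1) := by
      rcases Nat.lt_or_ge k (jm+1) with hc | hc
      · exact lt_of_lt_of_le hc (hNgei (jm+1))
      · have h1 := Nat.findGreatest_is_greatest (P := fun j => N j ≤ k)
          (Nat.lt_succ_self jm) hc
        exact Nat.not_le.1 h1
    have hk3 : 3 ≤ k := le_trans (le_max_right _ _) hk
    have hkpos : (0:ℝ) < k := by
      have : (3:ℝ) ≤ (k:ℝ) := by exact_mod_cast hk3
      linarith
    refine ⟨jm, hjm1, ?_⟩
    have h2 : (k:ℝ) ≤ Real.exp (η/2 * (C*4^jm)) := by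
      have h3 : (k:ℝ) < (N (jm+1) : ℝ) := by exact_mod_cast hjm3
      exact le_trans h3.le (hrace jm hjm2)
    exact (Real.log_le_iff_le_exp hkpos).2 h2
  -- the final point and bound
  refine ⟨v - 3*η, by rw [hηeq] at *; linarith, by linarith, ?_⟩
  set k₀ := max (N i₀) 3 with hk₀def
  refine ⟨M*k₀ + M*(81/(η/K)^3) + M*2, by positivity, ?_⟩
  have hwI : v - 3*η ∈ Set.Icc x v := by
    constructor
    · rw [hηeq] at *; linarith
    · linarith
  have hwle : ∀ i, v - 3*η ≤ tpt i := by
    intro i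
    have := htptlb i
    linarith
  have hterm : ∀ k : ℕ, k₀ ≤ k →
      f k (v - 3*η) ≤ M*Real.exp (-(η/K * Real.sqrt k)) + M*(1/(k:ℝ)^2) := by
    intro k hkk
    obtain ⟨i, hik, hlogk⟩ := hcover k hkk
    have hk3 : 3 ≤ k := le_trans (le_max_right _ _) hkk
    have hk1 : 1 ≤ k := by omega
    have hkpos : (0:ℝ) < k := by
      have : (3:ℝ) ≤ (k:ℝ) := by exact_mod_cast hk3
      linarith
    have hgk := hgpos i k hk1
    have hgb := cP i k hik
    have hfb := hgrw k hk1 (v - 3*η) (tpt i) hwI (htptI i) (hwle i) (g i k) hgk (hval i k)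
    have hgap : η ≤ tpt i - (v - 3*η) := by
      have := htptlb i
      linarith
    have hfb2 : f k (v - 3*η) ≤ M * Real.exp (-((k:ℝ)/(g i k) * η)) := by
      refine le_trans hfb ?_
      apply mul_le_mul_of_nonneg_left _ hM.le
      apply Real.exp_le_exp.2
      have hkg0 : 0 ≤ (k:ℝ)/(g i k) := by positivity
      nlinarith
    have hsk : (0:ℝ) < Real.sqrt k := Real.sqrt_pos.2 hkpos
    rcases max_cases (K*Real.sqrt k) ((k:ℝ)/(C*4^i)) with ⟨hmeq, _⟩ | ⟨hmeq, _⟩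
    · rw [hmeq] at hgb
      have hkg : Real.sqrt k / K ≤ (k:ℝ)/(g i k) := by
        have h6 : (k:ℝ)/(K*Real.sqrt k) ≤ (k:ℝ)/(g i k) :=
          div_le_div_of_nonneg_left hkpos.le hgk hgb
        have heq : (k:ℝ)/(K*Real.sqrt k) = Real.sqrt k / K := by
          rw [div_eq_div_iff (by positivity) (by positivity)]
          linear_combination (-K) * (Real.sq_sqrt hkpos.le)
        linarith [heq.symm.le]
      have h7 : η/K * Real.sqrt k ≤ (k:ℝ)/(g i k) * η := by
        have h8 : η/K * Real.sqrt k = (Real.sqrt k / K) * η := by ring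
        rw [h8]
        apply mul_le_mul_of_nonneg_right hkg hη.le
      have h9 : f k (v - 3*η) ≤ M * Real.exp (-(η/K * Real.sqrt k)) := by
        refine le_trans hfb2 ?_
        apply mul_le_mul_of_nonneg_left _ hM.le
        apply Real.exp_le_exp.2
        linarith
      have h10 : 0 ≤ M*(1/(k:ℝ)^2) := by positivity
      linarith
    · rw [hmeq] at hgb
      have hkg : C*4^i ≤ (k:ℝ)/(g i k) := by
        have h6 : (k:ℝ)/((k:ℝ)/(C*4^i)) ≤ (k:ℝ)/(g i k) :=
          div_le_div_of_nonneg_left hkpos.le hgk hgb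
        have h7 : (k:ℝ)/((k:ℝ)/(C*4^i)) = C*4^i := by
          field_simp
        linarith [h7.symm.le]
      have h9 : f k (v - 3*η) ≤ M * Real.exp (-(2 * Real.log k)) := by
        refine le_trans hfb2 ?_
        apply mul_le_mul_of_nonneg_left _ hM.le
        apply Real.exp_le_exp.2
        have h10 : 2 * Real.log k ≤ η * (C*4^i) := by
          have := hlogk
          nlinarith
        have h11 : η * (C*4^i) ≤ (k:ℝ)/(g i k) * η := by
          have := mul_le_mul_of_nonneg_right hkg hη.le
          nlinarith
        linarith
      have h12 : Real.exp (-(2 * Real.log k)) = 1/(k:ℝ)^2 := by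
        have e1 : Real.exp (2*Real.log k) = (k:ℝ)^2 := by
          rw [show (2:ℝ)*Real.log k = Real.log k + Real.log k by ring, Real.exp_add,
            Real.exp_log hkpos]
          ring
        rw [Real.exp_neg, e1]
        rw [one_div]
      rw [h12] at h9
      have h13 : 0 ≤ M*Real.exp (-(η/K * Real.sqrt k)) := by positivity
      linarith
  -- summing up
  intro n
  rw [hSdef]
  rcases Nat.lt_or_ge n k₀ with hcase | hcase
  · have h1 : ∑ k ∈ Finset.range n, f k (v - 3*η) ≤ ∑ k ∈ Finset.range n, M :=
      Finset.sum_le_sum fun k _ => hfM k _ hwI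
    rw [Finset.sum_const, Finset.card_range, nsmul_eq_mul] at h1
    have h2 : (n:ℝ) * M ≤ (k₀:ℝ) * M := by
      apply mul_le_mul_of_nonneg_right _ hM.le
      exact_mod_cast hcase.le
    have h3 : (0:ℝ) < M*(81/(η/K)^3) := by positivity
    have h4 : (0:ℝ) < M*2 := by linarith
    have h5 : (k₀:ℝ)*M = M*(k₀:ℝ) := by ring
    linarith
  · rw [Finset.range_eq_Ico, ← Finset.sum_Ico_consecutive _ (Nat.zero_le k₀) hcase]
    have hpartA : ∑ k ∈ Finset.Ico 0 k₀, f k (v - 3*η) ≤ M*(k₀:ℝ) := by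
      calc ∑ k ∈ Finset.Ico 0 k₀, f k (v - 3*η) ≤ ∑ k ∈ Finset.Ico 0 k₀, M :=
            Finset.sum_le_sum fun k _ => hfM k _ hwI
        _ = (k₀:ℝ) * M := by
            rw [Finset.sum_const, Nat.card_Ico, nsmul_eq_mul]
            norm_num
        _ = M*(k₀:ℝ) := by ring
    have hpartB : ∑ k ∈ Finset.Ico k₀ n, f k (v - 3*η) ≤ M*(81/(η/K)^3) + M*2 := by
      have h1 : ∑ k ∈ Finset.Ico k₀ n, f k (v - 3*η) ≤
          ∑ k ∈ Finset.Ico k₀ n, (M*Real.exp (-(η/K * Real.sqrt k)) + M*(1/(k:ℝ)^2)) := by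
        apply Finset.sum_le_sum
        intro k hk
        simp only [Finset.mem_Ico] at hk
        exact hterm k hk.1
      have hsub : Finset.Ico k₀ n ⊆ Finset.Ico 1 n := by
        apply Finset.Ico_subset_Ico _ (le_refl n)
        rw [hk₀def]; omega
      have h2 : ∑ k ∈ Finset.Ico k₀ n, (M*Real.exp (-(η/K * Real.sqrt k)) + M*(1/(k:ℝ)^2)) ≤
          ∑ k ∈ Finset.Ico 1 n, (M*Real.exp (-(η/K * Real.sqrt k)) + M*(1/(k:ℝ)^2)) := by
        apply Finset.sum_le_sum_of_subset_of_nonneg hsub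
        intro k _ _
        positivity
      have h3 : ∑ k ∈ Finset.Ico 1 n, (M*Real.exp (-(η/K * Real.sqrt k)) + M*(1/(k:ℝ)^2))
          = M * (∑ k ∈ Finset.Ico 1 n, Real.exp (-(η/K * Real.sqrt k)))
            + M * (∑ k ∈ Finset.Ico 1 n, 1/(k:ℝ)^2) := by
        rw [Finset.sum_add_distrib, Finset.mul_sum, Finset.mul_sum]
      have h4 : M * (∑ k ∈ Finset.Ico 1 n, Real.exp (-(η/K * Real.sqrt k))) ≤ M*(81/(η/K)^3) :=
        mul_le_mul_of_nonneg_left (aux_exp_sqrt_sum _ (by positivity) n) hM.le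
      have h5 : M * (∑ k ∈ Finset.Ico 1 n, 1/(k:ℝ)^2) ≤ M*2 :=
        mul_le_mul_of_nonneg_left (aux_inv_sq_sum n) hM.le
      linarith
    linarith


set_option maxHeartbeats 1000000 in
/-- **Analysis lemma for families of differential inequalities.**  Let
`f_n : [0,x₀] → [0,M]` be differentiable (with one-sided derivatives at the endpoints,
expressed via `HasDerivWithinAt` on `[0,x₀]`), nondecreasing functions, converging
pointwise on `[0,x₀]`, with `Σ_n(x) := Σ_{k<n} f_k(x) > 0` and satisfying the
differential inequality `f_n' ≥ (n/Σ_n) f_n` on `[0,x₀]` for all `n ≥ 1`.  Then there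
exists `x₁ ∈ [0,x₀]` such that:
(P1) for every `x < x₁` there are `c_x > 0` and `N` with `f_n(x) ≤ exp(−c_x n)` for all
`n ≥ N`; and
(P2) for every `x > x₁` the pointwise limit `f(x)` satisfies `f(x) ≥ x − x₁`. -/
theorem differential_inequality_sharp_threshold
    (x₀ M : ℝ) (hx₀ : 0 < x₀) (hM : 0 < M)
    (f f' : ℕ → ℝ → ℝ)
    (hrange : ∀ n : ℕ, ∀ x ∈ Set.Icc (0 : ℝ) x₀, f n x ∈ Set.Icc (0 : ℝ) M)
    (hmono : ∀ n : ℕ, MonotoneOn (f n) (Set.Icc (0 : ℝ) x₀))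
    (hderiv : ∀ n : ℕ, ∀ x ∈ Set.Icc (0 : ℝ) x₀,
      HasDerivWithinAt (f n) (f' n x) (Set.Icc (0 : ℝ) x₀) x)
    (hconv : ∀ x ∈ Set.Icc (0 : ℝ) x₀,
      ∃ L : ℝ, Filter.Tendsto (fun n => f n x) Filter.atTop (nhds L))
    (hpos : ∀ n : ℕ, 1 ≤ n → ∀ x ∈ Set.Icc (0 : ℝ) x₀,
      0 < ∑ k ∈ Finset.range n, f k x)
    (hineq : ∀ n : ℕ, 1 ≤ n → ∀ x ∈ Set.Icc (0 : ℝ) x₀,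
      ((n : ℝ) / ∑ k ∈ Finset.range n, f k x) * f n x ≤ f' n x) :
    ∃ x₁ ∈ Set.Icc (0 : ℝ) x₀,
      (∀ x ∈ Set.Icc (0 : ℝ) x₀, x < x₁ →
        ∃ c : ℝ, 0 < c ∧ ∃ N : ℕ, ∀ n ≥ N, f n x ≤ Real.exp (-(c * n))) ∧
      (∀ x ∈ Set.Icc (0 : ℝ) x₀, x₁ < x →
        ∀ L : ℝ, Filter.Tendsto (fun n => f n x) Filter.atTop (nhds L) →
          x - x₁ ≤ L) := by
  classical
  have hf0 : ∀ n, ∀ t ∈ Set.Icc (0:ℝ) x₀, 0 ≤ f n t := fun n t ht => (hrange n t ht).1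
  have hfM : ∀ n, ∀ t ∈ Set.Icc (0:ℝ) x₀, f n t ≤ M := fun n t ht => (hrange n t ht).2
  obtain ⟨S, hSdef⟩ : ∃ S : ℕ → ℝ → ℝ, ∀ n t, S n t = ∑ k ∈ Finset.range n, f k t :=
    ⟨_, fun n t => rfl⟩
  have hSpos' : ∀ n, 1 ≤ n → ∀ t ∈ Set.Icc (0:ℝ) x₀, 0 < S n t := by
    intro n hn t ht; rw [hSdef]; exact hpos n hn t ht
  have hSmonox : ∀ n, ∀ s ∈ Set.Icc (0:ℝ) x₀, ∀ t ∈ Set.Icc (0:ℝ) x₀, s ≤ t →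
      S n s ≤ S n t := by
    intro n s hs t ht hst
    rw [hSdef, hSdef]
    exact Finset.sum_le_sum fun k _ => hmono k hs ht hst
  -- limit function
  obtain ⟨l, hl⟩ : ∃ l : ℝ → ℝ, ∀ t, ∀ _ : t ∈ Set.Icc (0:ℝ) x₀,
      Filter.Tendsto (fun n => f n t) Filter.atTop (nhds (l t)) := by
    refine ⟨fun t => if ht : t ∈ Set.Icc (0:ℝ) x₀ then (hconv t ht).choose else 0,
      fun t ht => ?_⟩
    simp only [dif_pos ht]
    exact (hconv t ht).choose_spec
  have hl0 : ∀ t ∈ Set.Icc (0:ℝ) x₀, 0 ≤ l t := fun t ht =>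
    ge_of_tendsto' (hl t ht) (fun n => hf0 n t ht)
  have hlM : ∀ t ∈ Set.Icc (0:ℝ) x₀, l t ≤ M := fun t ht =>
    le_of_tendsto' (hl t ht) (fun n => hfM n t ht)
  have hlmono : ∀ s ∈ Set.Icc (0:ℝ) x₀, ∀ t ∈ Set.Icc (0:ℝ) x₀, s ≤ t → l s ≤ l t := by
    intro s hs t ht hst
    exact le_of_tendsto_of_tendsto' (hl s hs) (hl t ht) (fun n => hmono n hs ht hst)
  -- Cesàro means
  have hces : ∀ t, ∀ _ : t ∈ Set.Icc (0:ℝ) x₀,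
      Filter.Tendsto (fun n : ℕ => S n t / n) Filter.atTop (nhds (l t)) := by
    intro t ht
    have h1 := (hl t ht).cesaro
    refine h1.congr fun n => ?_
    rw [hSdef, div_eq_inv_mul]
  -- Gronwall inequality
  have grw : ∀ k : ℕ, 1 ≤ k → ∀ u w, u ∈ Set.Icc (0:ℝ) x₀ → w ∈ Set.Icc (0:ℝ) x₀ → u ≤ w →
      ∀ G : ℝ, 0 < G → S k w ≤ G →
      f k u * Real.exp ((k:ℝ)/G * (w-u)) ≤ f k w := by
    intro k hk u w hu hw huw G hG hSG
    apply aux_gron (f k) (f' k) 0 x₀ u w _ hu.1 huw hw.2 (hderiv k)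
    intro t ht
    have htI : t ∈ Set.Icc (0:ℝ) x₀ := ⟨le_trans hu.1 ht.1, le_trans ht.2 hw.2⟩
    have h1 := hineq k hk t htI
    rw [← hSdef] at h1
    have hSt : 0 < S k t := hSpos' k hk t htI
    have hStw : S k t ≤ S k w := hSmonox k t htI w hw ht.2
    have hStG : S k t ≤ G := le_trans hStw hSG
    have h2 : (k:ℝ)/G ≤ (k:ℝ)/S k t :=
      div_le_div_of_nonneg_left (Nat.cast_nonneg k) hSt hStG
    calc (k:ℝ)/G * f k t ≤ (k:ℝ)/S k t * f k t :=
          mul_le_mul_of_nonneg_right h2 (hf0 k t htI)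
      _ ≤ f' k t := h1
  have grw' : ∀ k : ℕ, 1 ≤ k → ∀ u w, u ∈ Set.Icc (0:ℝ) x₀ → w ∈ Set.Icc (0:ℝ) x₀ → u ≤ w →
      ∀ G : ℝ, 0 < G → S k w ≤ G →
      f k u ≤ M * Real.exp (-((k:ℝ)/G * (w-u))) := by
    intro k hk u w hu hw huw G hG hSG
    have h1 := grw k hk u w hu hw huw G hG hSG
    have h2 : f k w ≤ M := hfM k w hw
    have hE : (0:ℝ) < Real.exp ((k:ℝ)/G * (w-u)) := Real.exp_pos _
    rw [Real.exp_neg]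
    have h3 : f k u * Real.exp ((k:ℝ)/G * (w-u)) ≤ M := le_trans h1 h2
    calc f k u = f k u * Real.exp ((k:ℝ)/G * (w-u)) * (Real.exp ((k:ℝ)/G * (w-u)))⁻¹ := by
          field_simp
      _ ≤ M * (Real.exp ((k:ℝ)/G * (w-u)))⁻¹ :=
          mul_le_mul_of_nonneg_right h3 (inv_nonneg.2 hE.le)
  -- the threshold point
  set Dset : Set ℝ := insert (0:ℝ) {t | t ∈ Set.Icc (0:ℝ) x₀ ∧ l t = 0} with hDsetdef
  have hDne : Dset.Nonempty := ⟨0, Set.mem_insert _ _⟩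
  have hDbdd : BddAbove Dset := by
    refine ⟨x₀, ?_⟩
    rintro y (rfl | ⟨hyI, _⟩)
    · exact hx₀.le
    · exact hyI.2
  set x₁ := sSup Dset with hx₁def
  have hx₁0 : 0 ≤ x₁ := le_csSup hDbdd (Set.mem_insert _ _)
  have hx₁x₀ : x₁ ≤ x₀ := by
    apply csSup_le hDne
    rintro y (rfl | ⟨hyI, _⟩)
    · exact hx₀.le
    · exact hyI.2
  refine ⟨x₁, ⟨hx₁0, hx₁x₀⟩, ?_, ?_⟩
  · -- P1 : exponential decay below the threshold
    intro x hx hlt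
    obtain ⟨v, hvD, hxv⟩ := exists_lt_of_lt_csSup hDne hlt
    have hvI : v ∈ Set.Icc (0:ℝ) x₀ ∧ l v = 0 := by
      rcases hvD with rfl | hv
      · exact absurd hxv (not_lt.2 hx.1)
      · exact hv
    have hsub : Set.Icc x v ⊆ Set.Icc (0:ℝ) x₀ := Set.Icc_subset_Icc hx.1 hvI.1.2
    have hslow : Filter.Tendsto (fun k : ℕ => S k v / k) Filter.atTop (nhds 0) := by
      have := hces v hvI.1
      rwa [hvI.2] at this
    obtain ⟨w, hxw, hwv, C, hC0, hCb⟩ := aux_crux M hM f x v hxv S hSdef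
      (fun k t ht => hf0 k t (hsub ht)) (fun k t ht => hfM k t (hsub ht))
      (fun k => (hmono k).mono hsub)
      (fun k hk => hSpos' k hk v hvI.1)
      (fun k hk u w hu hw huw G hG hSG =>
        grw' k hk u w (hsub hu) (hsub hw) huw G hG hSG)
      hslow
    have hwI : w ∈ Set.Icc (0:ℝ) x₀ :=
      hsub ⟨hxw.le, hwv.le⟩
    -- decay at x
    have hdecay : ∀ k : ℕ, 1 ≤ k → f k x ≤ M * Real.exp (-((w-x)/C * k)) := by
      intro k hk
      have h1 := grw' k hk x w hx hwI hxw.le C hC0 (hCb k)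
      have h2 : ((k:ℝ)/C * (w-x)) = (w-x)/C * k := by ring
      rwa [h2] at h1
    have hc₀ : 0 < (w-x)/C := by
      have : 0 < w - x := by linarith
      positivity
    set c₀ := (w-x)/C with hc₀def
    obtain ⟨N₁, hN₁⟩ := exists_nat_ge (2*Real.log M/c₀)
    refine ⟨c₀/2, by positivity, N₁ + 1, fun n hn => ?_⟩
    have hn1 : 1 ≤ n := by omega
    have h1 := hdecay n hn1
    have h2 : Real.log M ≤ c₀/2 * n := by
      have h3 : (N₁:ℝ) ≤ n := by exact_mod_cast Nat.le_of_succ_le hn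
      have h4 : 2*Real.log M/c₀ ≤ (n:ℝ) := le_trans hN₁ h3
      rw [div_le_iff₀ hc₀] at h4
      nlinarith
    have h5 : M ≤ Real.exp (c₀/2 * n) := (Real.log_le_iff_le_exp hM).1 h2
    calc f n x ≤ M * Real.exp (-(c₀ * n)) := by
          have h6 : -(c₀ * n) = -(c₀ * n) := rfl
          have h7 : (-(c₀/1 * n)) = -(c₀ * n) := by ring
          have := h1
          have h8 : -((w-x)/C * n) = -(c₀*n) := by rw [hc₀def]
          rwa [h8] at this
      _ ≤ Real.exp (c₀/2 * n) * Real.exp (-(c₀ * n)) :=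
          mul_le_mul_of_nonneg_right h5 (Real.exp_pos _).le
      _ = Real.exp (c₀/2 * n + -(c₀ * n)) := (Real.exp_add _ _).symm
      _ = Real.exp (-(c₀/2 * n)) := by ring_nf
  · -- P2 : lower bound for the limit above the threshold
    intro x hx hlt L hL
    have hlxL : l x = L := tendsto_nhds_unique (hl x hx) hL
    rw [← hlxL]
    have hlpos : ∀ u, u ∈ Set.Icc (0:ℝ) x₀ → x₁ < u → 0 < l u := by
      intro u huI hu
      rcases eq_or_lt_of_le (hl0 u huI) with h | h
      · exfalso
        have : u ∈ Dset := Set.mem_insert_of_mem _ ⟨huI, h.symm⟩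
        have := le_csSup hDbdd this
        exact absurd hu (not_lt.2 this)
      · exact h
    -- the key limit inequality
    have hkey : ∀ u w, u ∈ Set.Icc (0:ℝ) x₀ → w ∈ Set.Icc (0:ℝ) x₀ → u ≤ w → 0 < l w →
        l u * Real.exp ((w-u)/l w) ≤ l w := by
      intro u w huI hwI huw hlw
      have h1 : ∀ n : ℕ, 1 ≤ n →
          f n u * Real.exp ((w-u)/(S n w/(n:ℝ))) ≤ f n w := by
        intro n hn
        have hSw : 0 < S n w := hSpos' n hn w hwI
        have h2 := grw n hn u w huI hwI huw (S n w) hSw (le_refl _)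
        have h3 : ((n:ℝ)/S n w)*(w-u) = (w-u)/(S n w/(n:ℝ)) := by
          rw [div_div_eq_mul_div]
          ring
        rwa [h3] at h2
      have htend1 : Filter.Tendsto (fun n : ℕ => f n u * Real.exp ((w-u)/(S n w/(n:ℝ))))
          Filter.atTop (nhds (l u * Real.exp ((w-u)/l w))) := by
        apply Filter.Tendsto.mul (hl u huI)
        have h4 : Filter.Tendsto (fun n : ℕ => (w-u)/(S n w/(n:ℝ))) Filter.atTop
            (nhds ((w-u)/l w)) :=
          Filter.Tendsto.div tendsto_const_nhds (hces w hwI) (ne_of_gt hlw)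
        exact (Real.continuous_exp.tendsto _).comp h4
      apply le_of_tendsto_of_tendsto htend1 (hl w hwI)
      filter_upwards [Filter.eventually_ge_atTop 1] with n hn using h1 n hn
    -- the chaining argument
    have hchain : ∀ u, u ∈ Set.Icc (0:ℝ) x₀ → x₁ < u → u ≤ x → l u + (x - u) ≤ l x := by
      intro u huI hu hux
      have hlu : 0 < l u := hlpos u huI hu
      have hxu0 : 0 ≤ x - u := by linarith
      have hstep : ∀ m : ℕ, 1 ≤ m → l u + (x-u) - (x-u)^2/(m*l u) ≤ l x := by
        intro m hm
        have hm0 : (0:ℝ) < m := by exact_mod_cast hm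
        set Δ := (x-u)/m with hΔdef
        have hΔ0 : 0 ≤ Δ := by positivity
        have hmem : ∀ j : ℕ, j ≤ m → u + j*Δ ∈ Set.Icc (0:ℝ) x₀ := by
          intro j hj
          have hjm : (j:ℝ) ≤ m := by exact_mod_cast hj
          have h5 : (j:ℝ)*Δ ≤ (m:ℝ)*Δ := mul_le_mul_of_nonneg_right hjm hΔ0
          have h6 : (m:ℝ)*Δ = x - u := by
            rw [hΔdef]
            field_simp
          constructor
          · have : (0:ℝ) ≤ (j:ℝ)*Δ := by positivity
            linarith [huI.1]
          · have : u + (j:ℝ)*Δ ≤ x := by linarith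
            linarith [hx.2]
        have hind : ∀ j : ℕ, j ≤ m →
            (j:ℝ)*Δ*(l u) ≤ (l (u + j*Δ) - l u)*(l u + Δ) := by
          intro j hj
          induction j with
          | zero => simp
          | succ j ih =>
            have hj' : j ≤ m := by omega
            have ihj := ih hj'
            have hjm1 : (j+1:ℕ) ≤ m := hj
            -- the single step
            have hA : u + j*Δ ∈ Set.Icc (0:ℝ) x₀ := hmem j hj'
            have hB : u + (j+1:ℕ)*Δ ∈ Set.Icc (0:ℝ) x₀ := hmem (j+1) hj
            have hABle : u + (j:ℝ)*Δ ≤ u + ((j+1:ℕ):ℝ)*Δ := by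
              push_cast
              nlinarith
            have hluB : l u ≤ l (u + (j+1:ℕ)*Δ) := by
              apply hlmono u huI _ hB
              have : (0:ℝ) ≤ ((j+1:ℕ):ℝ)*Δ := by positivity
              linarith
            have hlB : 0 < l (u + (j+1:ℕ)*Δ) := lt_of_lt_of_le hlu hluB
            have hk := hkey (u + j*Δ) (u + (j+1:ℕ)*Δ) hA hB hABle hlB
            have hgapeq : (u + ((j+1:ℕ):ℝ)*Δ) - (u + (j:ℝ)*Δ) = Δ := by
              push_cast
              ring
            rw [hgapeq] at hk
            -- abbreviations
            set A := l (u + (j:ℝ)*Δ) with hAdef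
            set B := l (u + ((j+1:ℕ):ℝ)*Δ) with hBdef
            have hA0 : 0 ≤ A := hl0 _ hA
            have hAB : A ≤ B := hlmono _ hA _ hB hABle
            have hexp : 1 + Δ/B ≤ Real.exp (Δ/B) := by
              linarith [Real.add_one_le_exp (Δ/B)]
            have h7 : A*(1 + Δ/B) ≤ B :=
              le_trans (mul_le_mul_of_nonneg_left hexp hA0) hk
            -- multiply out : A*B + A*Δ ≤ B^2
            have h8 : A*B + A*Δ ≤ B^2 := by
              have h9 : A*(1 + Δ/B)*B ≤ B*B := mul_le_mul_of_nonneg_right h7 hlB.le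
              have h10 : A*(1 + Δ/B)*B = A*B + A*Δ := by
                field_simp
              nlinarith [h9, h10]
            -- single-step estimate : Δ*(l u) ≤ (B - A)*(l u + Δ)
            have hstep1 : Δ*(l u) ≤ (B - A)*(l u + Δ) := by
              have h11 : B*(B-A) ≥ A*Δ := by nlinarith
              have h12 : (B-A)*(B - l u) ≥ 0 := by nlinarith
              have h13 : (B-A)*(l u + Δ)*B ≥ Δ*(l u)*B := by nlinarith
              have hB0 : 0 < B := hlB
              nlinarith
            -- combine with the induction hypothesis
            have hABmono : l u ≤ A := by
              apply hlmono u huI _ hA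
              have : (0:ℝ) ≤ (j:ℝ)*Δ := by positivity
              linarith
            push_cast
            push_cast at ihj hstep1 ⊢
            nlinarith [ihj, hstep1]
        -- use j = m
        have hfin := hind m (le_refl m)
        have humx : u + (m:ℝ)*Δ = x := by
          rw [hΔdef]
          field_simp
          ring
        rw [humx] at hfin
        -- conclude
        have hlxlu : l u ≤ l x := by
          apply hlmono u huI x hx hux
        have hG0 : 0 ≤ l x - l u := by linarith
        have hmΔ : (m:ℝ)*Δ = x - u := by
          rw [hΔdef]; field_simp
        rw [hmΔ] at hfin
        -- from (x-u)*(l u) ≤ (l x - l u)*(l u + Δ) derive the bound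
        rcases le_or_gt (l x - l u) (x - u) with hcase | hcase
        · have h14 : (x-u)*(l u) - (l x - l u)*(l u) ≤ (l x - l u)*Δ := by nlinarith
          have h15 : (l x - l u)*Δ ≤ (x-u)*Δ := mul_le_mul_of_nonneg_right hcase hΔ0
          have h16 : (x-u)*Δ = (x-u)^2/m := by
            rw [hΔdef]; ring
          have h17 : (x-u)*(l u) - (l x - l u)*(l u) ≤ (x-u)^2/m := by
            rw [← h16]; linarith
          have h18 : (x-u)^2/(m*l u) * (l u) = (x-u)^2/m := by
            field_simp
          nlinarith [h17, h18, hlu]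
        · have h19 : 0 ≤ (x-u)^2/(m*l u) := by positivity
          linarith
      -- let m → ∞
      have htendm : Filter.Tendsto (fun m : ℕ => l u + (x-u) - (x-u)^2/(m*l u))
          Filter.atTop (nhds (l u + (x-u) - 0)) := by
        apply Filter.Tendsto.sub tendsto_const_nhds
        have heq : (fun m : ℕ => (x-u)^2/(m*l u)) = fun m : ℕ => ((x-u)^2/l u)*(1/m) := by
          funext m
          rw [mul_one_div, div_div, mul_comm (m:ℝ) (l u)]
        rw [heq]
        have := tendsto_one_div_atTop_nhds_zero_nat (𝕜 := ℝ)
        have h20 := this.const_mul ((x-u)^2/l u)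
        simpa using h20
      have h21 : l u + (x-u) - 0 ≤ l x := by
        apply le_of_tendsto htendm
        filter_upwards [Filter.eventually_ge_atTop 1] with m hm using hstep m hm
      linarith
    -- final epsilon argument
    have hfin : ∀ ε : ℝ, 0 < ε → x - x₁ - ε ≤ l x := by
      intro ε hε
      set u := min x (x₁ + ε) with hudef
      have hu1 : x₁ < u := lt_min hlt (by linarith)
      have huI : u ∈ Set.Icc (0:ℝ) x₀ := by
        constructor
        · have : 0 ≤ x := hx.1
          have : 0 ≤ x₁ + ε := by linarith
          simp only [hudef, le_min_iff]
          constructor <;> linarith [hx.1]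
        · exact le_trans (min_le_left _ _) hx.2
      have hux : u ≤ x := min_le_left _ _
      have h22 := hchain u huI hu1 hux
      have h23 : 0 ≤ l u := hl0 u huI
      have h24 : u ≤ x₁ + ε := min_le_right _ _
      linarith
    by_contra hcon
    push_neg at hcon
    have h25 := hfin ((x - x₁ - l x)/2) (by linarith)
    linarith
end

section
/- Influence lower bound via the OSSS inequality: For Bernoulli bond percolation on ℤ^d at parameter p ∈ (0,1), for every n ≥ 1, Σ_{e ∈ E_n} Inf_e[𝟙_{0 ↔ ∂Λ_n}] ≥ (n / S_n) · θ_n(p)(1 − θ_n(p)), where E_n is the set of edges with both endpoints in Λ_n, θ_k(p) := ℙ_p[0 ↔ ∂Λ_k] (with θ_0 := 1), and S_n := Σ_{k=0}^{n−1} θ_k(p). -/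
open scoped Classical

section Percolation

/-!  Bernoulli bond percolation on `ℤ^d`.

Vertices are points of `ℤ^d` (functions `Fin d → ℤ`).  An edge of the lattice joins two
vertices at Euclidean distance 1; we encode the edge `{x, x + eᵢ}` (where `eᵢ` is the
`i`-th unit vector) by the pair `(x, i)`, which gives a bijective encoding of the edge
set `𝔼^d`.  A percolation configuration assigns a Boolean (open/closed) to every edge.

Probabilities of events depending on finitely many edges are expressed as the
corresponding finite sums of Bernoulli(`p`) product weights; probabilities of
increasing/decreasing limits of such events (`0 ↔ ∞`, existence of an infinite cluster)
are expressed as the corresponding monotone limits (`⨅`/`⨆`) of finite-volume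
probabilities, which is how they are obtained from continuity of probability measures. -/

/-- A vertex of `ℤ^d`. -/
abbrev PVert (d : ℕ) := Fin d → ℤ

/-- An edge of `ℤ^d`: the pair `(x, i)` encodes the edge `{x, x + eᵢ}`. -/
abbrev PEdge (d : ℕ) := (Fin d → ℤ) × Fin d

/-- The `i`-th unit vector of `ℤ^d`. -/
def unitVec (d : ℕ) (i : Fin d) : PVert d := fun j => if j = i then 1 else 0

/-- A percolation configuration: each edge is open (`true`) or closed (`false`). -/
abbrev PConfig (d : ℕ) := PEdge d → Bool

/-- `x` and `y` are joined by an open edge of `ω`. -/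
def openAdj {d : ℕ} (ω : PConfig d) (x y : PVert d) : Prop :=
  ∃ i : Fin d, (y = x + unitVec d i ∧ ω (x, i) = true) ∨
               (x = y + unitVec d i ∧ ω (y, i) = true)

/-- `x` and `y` are connected by an open path of `ω` all of whose vertices lie in `S`. -/
def connIn {d : ℕ} (ω : PConfig d) (S : Set (PVert d)) (x y : PVert d) : Prop :=
  Relation.ReflTransGen (fun a b => a ∈ S ∧ b ∈ S ∧ openAdj ω a b) x y

/-- The probability, under the product Bernoulli(`p`) measure `ℙ_p`, of an event `A`
depending only on the (finitely many) edges in `E`: the sum, over configurations `η` of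
the edges of `E`, of the Bernoulli weight of `η` times the indicator of `A`. -/
noncomputable def cylProb (d : ℕ) (p : ℝ) (E : Finset (PEdge d))
    (A : PConfig d → Prop) : ℝ :=
  ∑ η : {e // e ∈ E} → Bool,
    (∏ e : {e // e ∈ E}, if η e then p else 1 - p) *
      (if A (fun e => if h : e ∈ E then η ⟨e, h⟩ else false) then 1 else 0)

/-- The influence `Inf_e[𝟙_A] = 𝔼_p[|𝟙_A(ω) − 𝟙_A(Flip_e ω)|]` of the edge `e` on an
event `A` depending only on the edges in `E`. -/
noncomputable def cylInfluence (d : ℕ) (p : ℝ) (E : Finset (PEdge d))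
    (A : PConfig d → Prop) (e : PEdge d) : ℝ :=
  ∑ η : {e' // e' ∈ E} → Bool,
    (∏ e' : {e' // e' ∈ E}, if η e' then p else 1 - p) *
      |(if A (fun e' => if h : e' ∈ E then η ⟨e', h⟩ else false) then (1 : ℝ) else 0) -
        (if A (Function.update (fun e' => if h : e' ∈ E then η ⟨e', h⟩ else false) e
            (!(if h : e ∈ E then η ⟨e, h⟩ else false))) then (1 : ℝ) else 0)|

/-- The sup-norm `‖x‖_∞` of a vertex, as a natural number. -/
def supNorm {d : ℕ} (x : PVert d) : ℕ :=
  Finset.univ.sup fun i => (x i).natAbs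

/-- The box `Λ_n = [−n,n]^d`, as a set of vertices. -/
def box (d : ℕ) (n : ℕ) : Set (PVert d) := {x | supNorm x ≤ n}

/-- The box `Λ_n`, as a finset. -/
noncomputable def boxF (d : ℕ) (n : ℕ) : Finset (PVert d) :=
  Fintype.piFinset fun _ => Finset.Icc (-(n : ℤ)) n

/-- The edges with both endpoints in a given finset of vertices. -/
def edgesIn (d : ℕ) (V : Finset (PVert d)) : Finset (PEdge d) :=
  (V ×ˢ (Finset.univ : Finset (Fin d))).filter fun e => e.1 + unitVec d e.2 ∈ V

/-- `E_n`: the edges with both endpoints in `Λ_n`. -/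
noncomputable def boxEdges (d : ℕ) (n : ℕ) : Finset (PEdge d) := edgesIn d (boxF d n)

/-- The event `{0 ↔ ∂Λ_n}`: the origin is connected to `∂Λ_n = {x : ‖x‖_∞ = n}` by an
open path (inside `Λ_n`; this only depends on the edges of `E_n`). -/
def zeroToBoundary (d : ℕ) (n : ℕ) (ω : PConfig d) : Prop :=
  ∃ y : PVert d, supNorm y = n ∧ connIn ω (box d n) 0 y

/-- `θ_n(p) = ℙ_p[0 ↔ ∂Λ_n]` (with `θ_0 = 1`). -/
noncomputable def theta (d : ℕ) (p : ℝ) (n : ℕ) : ℝ :=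
  cylProb d p (boxEdges d n) (zeroToBoundary d n)

/-- `ℙ_p[0 ↔ ∞]`: since the events `{0 ↔ ∂Λ_n}` decrease to `{0 ↔ ∞}`, this is the
decreasing limit `⨅ n, θ_n(p)`. -/
noncomputable def probZeroToInfty (d : ℕ) (p : ℝ) : ℝ := ⨅ n : ℕ, theta d p n

/-- The event `{Λ_k ↔ ∂Λ_N}` (within `Λ_N`). -/
def boxToBoundary (d : ℕ) (k N : ℕ) (ω : PConfig d) : Prop :=
  ∃ x y : PVert d, supNorm x ≤ k ∧ supNorm y = N ∧ connIn ω (box d N) x y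

/-- `ℙ_p[∃ an infinite open connected component]`: the events `{Λ_k ↔ ∂Λ_{k+n}}`
decrease (as `n → ∞`) to `{Λ_k ↔ ∞}`, which increase (as `k → ∞`) to the event that
some vertex lies in an infinite open cluster; accordingly the probability is the
monotone double limit `⨆ k, ⨅ n` of finite-volume probabilities. -/
noncomputable def probInfiniteCluster (d : ℕ) (p : ℝ) : ℝ :=
  ⨆ k : ℕ, ⨅ n : ℕ,
    cylProb d p (boxEdges d (k + n)) (boxToBoundary d k (k + n))

/-- The critical point `p_c = sup{p ∈ [0,1] : ℙ_p[0 ↔ ∞] = 0}` of Bernoulli bond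
percolation on `ℤ^d`. -/
noncomputable def pCrit (d : ℕ) : ℝ :=
  sSup {p : ℝ | p ∈ Set.Icc (0 : ℝ) 1 ∧ probZeroToInfty d p = 0}

end Percolation

section PlanarPercolation

/-! Rectangles and crossing events for `ℤ²`. -/

/-- The vertex set of the rectangle `R(n,m) = [0,n] × [0,m]` in `ℤ²`. -/
def rect (n m : ℕ) : Set (PVert 2) :=
  {x | 0 ≤ x 0 ∧ x 0 ≤ n ∧ 0 ≤ x 1 ∧ x 1 ≤ m}

/-- The rectangle `R(n,m)`, as a finset. -/
noncomputable def rectF (n m : ℕ) : Finset (PVert 2) :=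
  Fintype.piFinset fun j => Finset.Icc 0 (if j = 0 then (n : ℤ) else (m : ℤ))

/-- The edges of the rectangle `R(n,m)`. -/
noncomputable def rectEdges (n m : ℕ) : Finset (PEdge 2) := edgesIn 2 (rectF n m)

/-- `ℋ(n,m)`: the rectangle `R(n,m)` contains an open path from its left side
`{0} × [0,m]` to its right side `{n} × [0,m]`. -/
def crossH (n m : ℕ) (ω : PConfig 2) : Prop :=
  ∃ x y : PVert 2, x ∈ rect n m ∧ x 0 = 0 ∧ y ∈ rect n m ∧ y 0 = n ∧
    connIn ω (rect n m) x y

/-- `𝒱(n,m)`: the rectangle `R(n,m)` contains an open path from its bottom side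
`[0,n] × {0}` to its top side `[0,n] × {m}`. -/
def crossV (n m : ℕ) (ω : PConfig 2) : Prop :=
  ∃ x y : PVert 2, x ∈ rect n m ∧ x 1 = 0 ∧ y ∈ rect n m ∧ y 1 = m ∧
    connIn ω (rect n m) x y

/-- `ℙ_p[ℋ(n,m)]`. -/
noncomputable def probCrossH (p : ℝ) (n m : ℕ) : ℝ :=
  cylProb 2 p (rectEdges n m) (crossH n m)

/-- `ℙ_p[𝒱(n,m)]`. -/
noncomputable def probCrossV (p : ℝ) (n m : ℕ) : ℝ :=
  cylProb 2 p (rectEdges n m) (crossV n m)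

end PlanarPercolation



set_option linter.unusedSectionVars false
set_option linter.unusedVariables false
set_option maxHeartbeats 1000000

noncomputable section OSSSCore

open Finset

/-- Bernoulli weight of a single bit. -/
def bw (p : ℝ) (b : Bool) : ℝ := if b then p else 1 - p

/-- Product Bernoulli weight of a configuration. -/
def Wt (p : ℝ) {α : Type*} [Fintype α] (η : α → Bool) : ℝ := ∏ a, bw p (η a)

/-- `0/1` disagreement indicator. -/
def nq (a b : Bool) : ℝ := if a = b then 0 else 1

lemma nq_nonneg (a b : Bool) : 0 ≤ nq a b := by unfold nq; split <;> norm_num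

lemma nq_comm (a b : Bool) : nq a b = nq b a := by
  unfold nq; cases a <;> cases b <;> simp

lemma nq_self (a : Bool) : nq a a = 0 := by simp [nq]

lemma nq_triangle (a b c : Bool) : nq a c ≤ nq a b + nq b c := by
  unfold nq; cases a <;> cases b <;> cases c <;> norm_num

section Weights

variable {α : Type*} [Fintype α] [DecidableEq α] {p : ℝ}

lemma bw_nonneg (hp : p ∈ Set.Icc (0:ℝ) 1) (b : Bool) : 0 ≤ bw p b := by
  unfold bw; cases b <;> simp <;> [linarith [hp.2]; exact hp.1]

omit [DecidableEq α] in
lemma Wt_nonneg (hp : p ∈ Set.Icc (0:ℝ) 1) (η : α → Bool) : 0 ≤ Wt p η :=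
  Finset.prod_nonneg fun a _ => bw_nonneg hp _

lemma sum_bw : ∑ b : Bool, bw p b = 1 := by
  rw [Fintype.sum_bool]; unfold bw; norm_num

lemma Wt_sum_one : ∑ η : α → Bool, Wt p η = 1 := by
  have h := Finset.prod_univ_sum (fun _ : α => (Finset.univ : Finset Bool))
      (fun _ b => bw p b)
  rw [Fintype.piFinset_univ] at h
  have h2 : ∀ a : α, a ∈ (univ : Finset α) → ∑ b ∈ (univ : Finset Bool), bw p b = 1 :=
    fun _ _ => sum_bw
  calc ∑ η : α → Bool, Wt p η = ∏ _a : α, ∑ b : Bool, bw p b := by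
        rw [h]; rfl
    _ = 1 := by rw [Finset.prod_congr rfl h2]; simp

end Weights

section Weights2

variable {α : Type*} [Fintype α] [DecidableEq α] {p : ℝ}

/-- The flip-at-`i` involution as an equiv. -/
def flipEquiv (i : α) : (α → Bool) ≃ (α → Bool) where
  toFun η := Function.update η i (!(η i))
  invFun η := Function.update η i (!(η i))
  left_inv η := by
    simp [Function.update_idem, Function.update_self, Function.update_eq_self]
  right_inv η := by
    simp [Function.update_idem, Function.update_self, Function.update_eq_self]

lemma ksplit (i : α) (F : (α → Bool) → ℝ) :
    ∑ η : α → Bool, F η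
      = ∑ η : α → Bool, (if η i = true then F η + F (Function.update η i false) else 0) := by
  have h1 : ∑ η : α → Bool, F η
      = ∑ η : α → Bool,
          ((if η i = true then F η else 0) + (if η i = false then F η else 0)) := by
    refine Finset.sum_congr rfl fun η _ => ?_
    cases h : η i <;> simp [h]
  have h2 : ∑ η : α → Bool, (if η i = false then F η else 0)
      = ∑ η : α → Bool, (if η i = true then F (Function.update η i false) else 0) := by
    refine Fintype.sum_equiv (flipEquiv i) _ _ fun η => ?_
    cases h : η i
    · have : Function.update η i false = η := by
        rw [← h]; exact Function.update_eq_self i η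
      simp [flipEquiv, h, Function.update_idem, this]
    · simp [flipEquiv, h]
  rw [h1, Finset.sum_add_distrib, h2, ← Finset.sum_add_distrib]
  refine Finset.sum_congr rfl fun η _ => ?_
  cases h : η i <;> simp [h]

lemma Wt_update (i : α) (η : α → Bool) (b : Bool) :
    Wt p (Function.update η i b) = bw p b * ∏ a ∈ univ.erase i, bw p (η a) := by
  unfold Wt
  rw [← Finset.mul_prod_erase univ _ (Finset.mem_univ i)]
  congr 1
  · simp
  · refine Finset.prod_congr rfl fun a ha => ?_
    rw [Function.update_of_ne (Finset.ne_of_mem_erase ha)]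

lemma Wt_factor (i : α) (η : α → Bool) :
    Wt p η = bw p (η i) * ∏ a ∈ univ.erase i, bw p (η a) := by
  conv_lhs => rw [← Function.update_eq_self i η]
  exact Wt_update i η (η i)

/-- Resampling invariance: replacing coordinate `i` by a fresh Bernoulli bit
does not change expectations. -/
lemma resample_eq (i : α) (F : (α → Bool) → ℝ) :
    ∑ η : α → Bool, Wt p η * F η
      = ∑ η : α → Bool, Wt p η *
          (bw p true * F (Function.update η i true)
            + bw p false * F (Function.update η i false)) := by
  rw [ksplit i (fun η => Wt p η * F η), ksplit i (fun η => Wt p η * _)]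
  refine Finset.sum_congr rfl fun η _ => ?_
  by_cases h : η i = true
  · simp only [h, if_true]
    have e1 : Function.update η i true = η := by
      rw [← h]; exact Function.update_eq_self i η
    have e2 : Function.update (Function.update η i false) i true = η := by
      rw [Function.update_idem]; exact e1
    have e3 : Function.update (Function.update η i false) i false
        = Function.update η i false := by rw [Function.update_idem]
    have w1 : Wt p η = bw p true * ∏ a ∈ univ.erase i, bw p (η a) := by
      conv_lhs => rw [Wt_factor i η]
      rw [h]
    have w2 : Wt p (Function.update η i false)
        = bw p false * ∏ a ∈ univ.erase i, bw p (η a) := Wt_update i η false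
    rw [e2, e3, e1, w1, w2]
    simp only [bw, if_true, Bool.false_eq_true, if_false]
    ring
  · simp [h]

end Weights2

section Marg

variable {p : ℝ}

/-- Marginalization along an injection: the law of `η ∘ ρ` under the product
Bernoulli measure on `β → Bool` is the product Bernoulli measure on `α → Bool`. -/
lemma marg {α β : Type*} [Fintype α] [DecidableEq α] [Fintype β] [DecidableEq β]
    (ρ : α ↪ β) (C : (α → Bool) → ℝ) :
    ∑ η : β → Bool, Wt p η * C (η ∘ ρ) = ∑ ζ : α → Bool, Wt p ζ * C ζ := by
  classical
  set P : β → Prop := fun b => b ∈ Set.range ρ with hP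
  let e1 : α ≃ {b // P b} := Equiv.ofInjective ρ ρ.injective
  let ε : α ⊕ {b // ¬ P b} ≃ β :=
    (Equiv.sumCongr e1 (Equiv.refl _)).trans (Equiv.sumCompl P)
  have hεl : ∀ a : α, ε (Sum.inl a) = ρ a := fun a => rfl
  let E2 : ((α → Bool) × ({b // ¬ P b} → Bool)) ≃ (β → Bool) :=
    (Equiv.sumArrowEquivProdArrow α _ Bool).symm.trans
      (Equiv.arrowCongr ε (Equiv.refl Bool))
  have hE2 : ∀ (pr : (α → Bool) × ({b // ¬ P b} → Bool)) (b : β),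
      E2 pr b = Sum.elim pr.1 pr.2 (ε.symm b) := fun pr b => rfl
  have key : ∀ pr : (α → Bool) × ({b // ¬ P b} → Bool),
      Wt p (E2 pr) * C ((E2 pr) ∘ ρ) = (Wt p pr.1 * C pr.1) * Wt p pr.2 := by
    rintro ⟨ζ, ξ⟩
    have hcomp : (E2 (ζ, ξ)) ∘ ρ = ζ := by
      funext a
      have : ε.symm (ρ a) = Sum.inl a := by
        rw [Equiv.symm_apply_eq, hεl]
      simp [Function.comp, hE2, this]
    have hW : Wt p (E2 (ζ, ξ)) = Wt p ζ * Wt p ξ := by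
      unfold Wt
      rw [← Equiv.prod_comp ε (fun b => bw p ((E2 (ζ, ξ)) b))]
      rw [Fintype.prod_sum_type]
      congr 1
      · refine Finset.prod_congr rfl fun a _ => ?_
        have : ε.symm (ε (Sum.inl a)) = Sum.inl a := Equiv.symm_apply_apply _ _
        simp [hE2, this]
      · refine Finset.prod_congr rfl fun x _ => ?_
        have : ε.symm (ε (Sum.inr x)) = Sum.inr x := Equiv.symm_apply_apply _ _
        simp [hE2, this]
    rw [hcomp, hW]; ring
  calc ∑ η : β → Bool, Wt p η * C (η ∘ ρ)
      = ∑ pr : (α → Bool) × ({b // ¬ P b} → Bool), Wt p (E2 pr) * C ((E2 pr) ∘ ρ) :=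
        (Fintype.sum_equiv E2 _ _ fun pr => rfl).symm
    _ = ∑ pr : (α → Bool) × ({b // ¬ P b} → Bool), (Wt p pr.1 * C pr.1) * Wt p pr.2 :=
        Finset.sum_congr rfl fun pr _ => key pr
    _ = ∑ ζ : α → Bool, ∑ ξ : {b // ¬ P b} → Bool, (Wt p ζ * C ζ) * Wt p ξ := by
        rw [Fintype.sum_prod_type]
    _ = ∑ ζ : α → Bool, Wt p ζ * C ζ := by
        refine Finset.sum_congr rfl fun ζ _ => ?_
        rw [← Finset.mul_sum, Wt_sum_one, mul_one]

end Marg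
section DTdef

/-- Finite decision trees querying coordinates in `α`. -/
inductive DT (α : Type u) : Type u
  | leaf : Bool → DT α
  | node : α → DT α → DT α → DT α

namespace DT

variable {α : Type*}

/-- Run a decision tree on a configuration. -/
def eval : DT α → (α → Bool) → Bool
  | leaf b, _ => b
  | node i t0 t1, η => if η i then eval t1 η else eval t0 η

/-- `rev T η j`: the run of `T` on `η` queries the coordinate `j`. -/
def rev : DT α → (α → Bool) → α → Prop
  | leaf _, _, _ => False
  | node i t0 t1, η, j => j = i ∨ (if η i then rev t1 η j else rev t0 η j)

/-- Height of a decision tree. -/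
def ht : DT α → ℕ
  | leaf _ => 0
  | node _ t0 t1 => max (ht t0) (ht t1) + 1

@[simp] lemma eval_leaf (b : Bool) (η : α → Bool) : eval (leaf b) η = b := rfl
lemma eval_node (i : α) (t0 t1 : DT α) (η : α → Bool) :
    eval (node i t0 t1) η = if η i then eval t1 η else eval t0 η := rfl
@[simp] lemma rev_leaf (c : Bool) (η : α → Bool) (j : α) : rev (leaf c) η j ↔ False :=
  Iff.rfl
lemma rev_node (i : α) (t0 t1 : DT α) (η : α → Bool) (j : α) :
    rev (node i t0 t1) η j ↔ j = i ∨ (if η i then rev t1 η j else rev t0 η j) :=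
  Iff.rfl

variable [DecidableEq α]

/-- Hardwire the answer of coordinate `e` to `b`, removing all queries to `e`. -/
def hw (e : α) (b : Bool) : DT α → DT α
  | leaf c => leaf c
  | node i t0 t1 =>
      if i = e then (if b then hw e b t1 else hw e b t0)
      else node i (hw e b t0) (hw e b t1)

lemma ht_hw (e : α) (b : Bool) : ∀ t : DT α, ht (hw e b t) ≤ ht t := by
  intro t
  induction t with
  | leaf c => simp [hw, ht]
  | node i t0 t1 ih0 ih1 =>
      by_cases h : i = e
      · cases b <;> simp [hw, h, ht] <;> omega
      · simp [hw, h, ht]; omega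

lemma eval_hw (e : α) (b : Bool) : ∀ (t : DT α) (η : α → Bool),
    eval (hw e b t) η = eval t (Function.update η e b) := by
  intro t
  induction t with
  | leaf c => intro η; simp [hw]
  | node i t0 t1 ih0 ih1 =>
      intro η
      by_cases h : i = e
      · subst h
        cases b <;> simp [hw, eval_node, Function.update_self, ih0, ih1]
      · have hu : Function.update η e b i = η i :=
          Function.update_of_ne h _ _
        cases hηi : η i <;>
          simp [hw, h, eval_node, hu, hηi, ih0, ih1]

lemma rev_hw (e : α) (b : Bool) : ∀ (t : DT α) (η : α → Bool) (j : α),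
    rev (hw e b t) η j → j ≠ e ∧ rev t (Function.update η e b) j := by
  intro t
  induction t with
  | leaf c => intro η j h; exact absurd h (by simp [hw])
  | node i t0 t1 ih0 ih1 =>
      intro η j h
      by_cases hie : i = e
      · subst hie
        cases b with
        | false =>
            rw [hw] at h; simp only [if_true, Bool.false_eq_true, if_false, reduceIte] at h
            have := ih0 η j h
            refine ⟨this.1, ?_⟩
            rw [rev_node, Function.update_self]
            simp [this.2]
        | true =>
            rw [hw] at h; simp only [reduceIte] at h
            have := ih1 η j h
            refine ⟨this.1, ?_⟩
            rw [rev_node, Function.update_self]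
            simp [this.2]
      · rw [hw] at h
        simp only [hie, if_false, reduceIte] at h
        rw [rev_node] at h
        have hu : Function.update η e b i = η i :=
          Function.update_of_ne hie _ _
        rcases h with h | h
        · subst h
          exact ⟨hie, Or.inl rfl⟩
        · cases hηi : η i with
          | false =>
              rw [hηi] at h; simp only [Bool.false_eq_true, if_false, reduceIte] at h
              have := ih0 η j h
              refine ⟨this.1, ?_⟩
              rw [rev_node, hu, hηi]
              simp [this.2]
          | true =>
              rw [hηi] at h; simp only [reduceIte] at h
              have := ih1 η j h
              refine ⟨this.1, ?_⟩
              rw [rev_node, hu, hηi]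
              simp [this.2]

end DT

end DTdef
section OSSSIneq

open Finset

variable {α : Type*} [Fintype α] [DecidableEq α]

/-- Revealment of coordinate `j` by the decision tree `T`. -/
noncomputable def revd (p : ℝ) (T : DT α) (j : α) : ℝ :=
  ∑ η : α → Bool, Wt p η * (if T.rev η j then 1 else 0)

/-- Resampling influence of coordinate `i` on the Boolean function `h`. -/
noncomputable def rInf (p : ℝ) (h : (α → Bool) → Bool) (i : α) : ℝ :=
  ∑ η : α → Bool, Wt p η *
    (bw p true * nq (h η) (h (Function.update η i true))
      + bw p false * nq (h η) (h (Function.update η i false)))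

/-- Disagreement probability of `g, h` on two independent samples. -/
noncomputable def DD (p : ℝ) (g h : (α → Bool) → Bool) : ℝ :=
  ∑ η : α → Bool, Wt p η * (∑ η' : α → Bool, Wt p η' * nq (g η) (h η'))

/-- Disagreement probability of `g, h` on one sample. -/
noncomputable def DS (p : ℝ) (g h : (α → Bool) → Bool) : ℝ :=
  ∑ η : α → Bool, Wt p η * nq (g η) (h η)

variable {p : ℝ}

lemma revd_nonneg (hp : p ∈ Set.Icc (0:ℝ) 1) (T : DT α) (j : α) : 0 ≤ revd p T j :=
  Finset.sum_nonneg fun η _ => mul_nonneg (Wt_nonneg hp η) (by positivity)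

lemma rInf_nonneg (hp : p ∈ Set.Icc (0:ℝ) 1) (h : (α → Bool) → Bool) (i : α) :
    0 ≤ rInf p h i :=
  Finset.sum_nonneg fun η _ => mul_nonneg (Wt_nonneg hp η)
    (add_nonneg (mul_nonneg (bw_nonneg hp _) (nq_nonneg _ _))
      (mul_nonneg (bw_nonneg hp _) (nq_nonneg _ _)))

lemma DS_nonneg (hp : p ∈ Set.Icc (0:ℝ) 1) (g h : (α → Bool) → Bool) : 0 ≤ DS p g h :=
  Finset.sum_nonneg fun η _ => mul_nonneg (Wt_nonneg hp η) (nq_nonneg _ _)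

lemma revd_node_self (hp : p ∈ Set.Icc (0:ℝ) 1) (e : α) (t0 t1 : DT α) :
    revd p (DT.node e t0 t1) e = 1 := by
  unfold revd
  calc ∑ η : α → Bool, Wt p η * (if (DT.node e t0 t1).rev η e then (1:ℝ) else 0)
      = ∑ η : α → Bool, Wt p η := Finset.sum_congr rfl fun η _ => by
        have hc : DT.rev (DT.node e t0 t1) η e :=
          (DT.rev_node e t0 t1 η e).mpr (Or.inl rfl)
        rw [if_pos hc, mul_one]
    _ = 1 := Wt_sum_one

/-- The OSSS comparison lemma, two-function form, by induction on the height. -/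
theorem osss_claim (hp : p ∈ Set.Icc (0:ℝ) 1) :
    ∀ (N : ℕ) (T : DT α), T.ht ≤ N → ∀ h : (α → Bool) → Bool,
      DD p T.eval h ≤ DS p T.eval h + ∑ j, revd p T j * rInf p h j := by
  have leafcase : ∀ (c : Bool) (h : (α → Bool) → Bool),
      DD p (DT.eval (DT.leaf c)) h ≤ DS p (DT.eval (DT.leaf c)) h
        + ∑ j, revd p (DT.leaf c) j * rInf p h j := by
    intro c h
    have h1 : DD p (DT.eval (DT.leaf c)) h = DS p (DT.eval (DT.leaf c)) h := by
      unfold DD DS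
      simp only [DT.eval_leaf]
      rw [← Finset.sum_mul, Wt_sum_one, one_mul]
    rw [h1]
    refine le_add_of_nonneg_right (Finset.sum_nonneg fun j _ =>
      mul_nonneg (revd_nonneg hp _ _) (rInf_nonneg hp _ _))
  intro N
  induction N with
  | zero =>
      intro T hT h
      cases T with
      | leaf c => exact leafcase c h
      | node e t0 t1 => simp [DT.ht] at hT
  | succ N ih =>
      intro T hT h
      cases T with
      | leaf c => exact leafcase c h
      | node e t0 t1 =>
        set g := DT.eval (DT.node e t0 t1) with hg
        set tb : Bool → DT α := fun b => if b then t1 else t0 with htb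
        set Tb : Bool → DT α := fun b => DT.hw e b (tb b) with hTb
        set G : Bool → (α → Bool) → Bool := fun b => (Tb b).eval with hG
        have f1 : ∀ b η, G b η = (tb b).eval (Function.update η e b) := by
          intro b η; simp only [hG, hTb]; exact DT.eval_hw e b (tb b) η
        have f2 : ∀ (η : α → Bool) (b : Bool), g (Function.update η e b) = G b η := by
          intro η b
          rw [f1]
          simp only [hg, DT.eval_node, Function.update_self, Function.update_idem, htb]
          cases b <;> simp
        -- Step 1
        have step1 : DD p g h
            = bw p true * DD p (G true) h + bw p false * DD p (G false) h := by
          unfold DD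
          rw [resample_eq e (fun η => ∑ η' : α → Bool, Wt p η' * nq (g η) (h η'))]
          rw [Finset.mul_sum, Finset.mul_sum, ← Finset.sum_add_distrib]
          refine Finset.sum_congr rfl fun η _ => ?_
          rw [f2 η true, f2 η false]
          ring
        -- Step 2 : induction hypothesis for both subtrees
        have hhtb : ∀ b, (Tb b).ht ≤ N := by
          intro b
          refine le_trans (DT.ht_hw e b (tb b)) ?_
          have : (DT.node e t0 t1).ht = max t0.ht t1.ht + 1 := rfl
          cases b <;> simp only [htb] <;> simp <;> omega
        have step2 : ∀ b, DD p (G b) h ≤ DS p (G b) h + ∑ j, revd p (Tb b) j * rInf p h j :=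
          fun b => ih (Tb b) (hhtb b) h
        -- Step 3
        have step3 : bw p true * DS p (G true) h + bw p false * DS p (G false) h
            ≤ DS p g h + rInf p h e := by
          have hDS : DS p g h = ∑ η : α → Bool, Wt p η *
              (bw p true * nq (g (Function.update η e true)) (h (Function.update η e true))
                + bw p false * nq (g (Function.update η e false)) (h (Function.update η e false))) :=
            resample_eq e (fun ξ => nq (g ξ) (h ξ))
          unfold DS rInf at *
          rw [hDS, Finset.mul_sum, Finset.mul_sum, ← Finset.sum_add_distrib,
            ← Finset.sum_add_distrib]
          refine Finset.sum_le_sum fun η _ => ?_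
          have tr1 : nq (G true η) (h η)
              ≤ nq (g (Function.update η e true)) (h (Function.update η e true))
                + nq (h η) (h (Function.update η e true)) := by
            rw [← f2 η true]
            refine le_trans (nq_triangle _ (h (Function.update η e true)) _) ?_
            rw [nq_comm (h (Function.update η e true)) (h η)]
          have tr0 : nq (G false η) (h η)
              ≤ nq (g (Function.update η e false)) (h (Function.update η e false))
                + nq (h η) (h (Function.update η e false)) := by
            rw [← f2 η false]
            refine le_trans (nq_triangle _ (h (Function.update η e false)) _) ?_
            rw [nq_comm (h (Function.update η e false)) (h η)]
          have hbt := bw_nonneg hp true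
          have hbf := bw_nonneg hp false
          have hW := Wt_nonneg hp η
          nlinarith [mul_le_mul_of_nonneg_left tr1 (mul_nonneg hW hbt),
            mul_le_mul_of_nonneg_left tr0 (mul_nonneg hW hbf)]
        -- Step 4 : revealment comparison
        have step4 : ∀ j, j ≠ e →
            bw p true * revd p (Tb true) j + bw p false * revd p (Tb false) j
              ≤ revd p (DT.node e t0 t1) j := by
          intro j hj
          have hFeq : ∀ η : α → Bool, (if (DT.node e t0 t1).rev η j then (1:ℝ) else 0)
              = (if (tb (η e)).rev η j then (1:ℝ) else 0) := by
            intro η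
            have hiff : DT.rev (DT.node e t0 t1) η j ↔ (tb (η e)).rev η j := by
              rw [DT.rev_node]
              cases hηe : η e <;> simp [htb, hj]
            by_cases hc : (tb (η e)).rev η j
            · rw [if_pos (hiff.mpr hc), if_pos hc]
            · rw [if_neg (fun hcc => hc (hiff.mp hcc)), if_neg hc]
          have h0 : revd p (DT.node e t0 t1) j
              = ∑ η : α → Bool, Wt p η * (if (tb (η e)).rev η j then (1:ℝ) else 0) := by
            unfold revd
            exact Finset.sum_congr rfl fun η _ => by rw [hFeq η]
          rw [h0, resample_eq e (fun ξ => if (tb (ξ e)).rev ξ j then (1:ℝ) else 0)]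
          simp only [Function.update_self]
          unfold revd
          rw [Finset.mul_sum, Finset.mul_sum, ← Finset.sum_add_distrib]
          refine Finset.sum_le_sum fun η _ => ?_
          have hb : ∀ b, (if (Tb b).rev η j then (1:ℝ) else 0)
              ≤ (if (tb b).rev (Function.update η e b) j then (1:ℝ) else 0) := by
            intro b
            by_cases hc : (Tb b).rev η j
            · rw [if_pos hc, if_pos (DT.rev_hw e b (tb b) η j hc).2]
            · rw [if_neg hc]; positivity
          have hbt := bw_nonneg hp true
          have hbf := bw_nonneg hp false
          have hW := Wt_nonneg hp η
          nlinarith [mul_le_mul_of_nonneg_left (hb true) (mul_nonneg hW hbt),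
            mul_le_mul_of_nonneg_left (hb false) (mul_nonneg hW hbf)]
        have step4e : ∀ b, revd p (Tb b) e = 0 := by
          intro b
          unfold revd
          refine Finset.sum_eq_zero fun η _ => ?_
          rw [if_neg (fun hc => (DT.rev_hw e b (tb b) η e hc).1 rfl), mul_zero]
        -- Assemble
        calc DD p g h
            = bw p true * DD p (G true) h + bw p false * DD p (G false) h := step1
          _ ≤ bw p true * (DS p (G true) h + ∑ j, revd p (Tb true) j * rInf p h j)
              + bw p false * (DS p (G false) h + ∑ j, revd p (Tb false) j * rInf p h j) := by
              have hbt := bw_nonneg hp true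
              have hbf := bw_nonneg hp false
              exact add_le_add (mul_le_mul_of_nonneg_left (step2 true) hbt)
                (mul_le_mul_of_nonneg_left (step2 false) hbf)
          _ = (bw p true * DS p (G true) h + bw p false * DS p (G false) h)
              + ∑ j, (bw p true * revd p (Tb true) j + bw p false * revd p (Tb false) j)
                  * rInf p h j := by
              have hsum : ∑ j, (bw p true * revd p (Tb true) j
                    + bw p false * revd p (Tb false) j) * rInf p h j
                  = bw p true * ∑ j, revd p (Tb true) j * rInf p h j
                    + bw p false * ∑ j, revd p (Tb false) j * rInf p h j := by
                rw [Finset.mul_sum, Finset.mul_sum, ← Finset.sum_add_distrib]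
                exact Finset.sum_congr rfl fun j _ => by ring
              rw [hsum]
              ring
          _ ≤ (DS p g h + rInf p h e)
              + ∑ j, (bw p true * revd p (Tb true) j + bw p false * revd p (Tb false) j)
                  * rInf p h j := by
              exact add_le_add_left step3 _
          _ ≤ DS p g h + ∑ j, revd p (DT.node e t0 t1) j * rInf p h j := by
              rw [add_assoc]
              refine add_le_add_right ?_ _
              rw [← Finset.add_sum_erase _ _ (Finset.mem_univ e),
                ← Finset.add_sum_erase _ _ (Finset.mem_univ e)]
              rw [step4e true, step4e false, revd_node_self hp]
              simp only [mul_zero, zero_mul, add_zero, zero_add, one_mul]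
              refine add_le_add_right ?_ _
              refine Finset.sum_le_sum fun j hj => ?_
              exact mul_le_mul_of_nonneg_right (step4 j (Finset.ne_of_mem_erase hj))
                (rInf_nonneg hp h j)

/-- **The OSSS inequality** (resampling-influence form). -/
theorem osss (hp : p ∈ Set.Icc (0:ℝ) 1) (T : DT α) (f : (α → Bool) → Bool)
    (hf : T.eval = f) : DD p f f ≤ ∑ j, revd p T j * rInf p f j := by
  have := osss_claim hp T.ht T le_rfl f
  rw [hf] at this
  refine le_trans this ?_
  have : DS p f f = 0 := by
    unfold DS
    exact Finset.sum_eq_zero fun η _ => by rw [nq_self, mul_zero]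
  rw [this, zero_add]

end OSSSIneq
section PercLemmas

open Finset

variable {d : ℕ}

lemma supNorm_le_iff {x : PVert d} {m : ℕ} : supNorm x ≤ m ↔ ∀ j, (x j).natAbs ≤ m := by
  unfold supNorm
  rw [Finset.sup_le_iff]
  exact ⟨fun h j => h j (mem_univ j), fun h j _ => h j⟩

lemma mem_boxF_iff {x : PVert d} {n : ℕ} : x ∈ boxF d n ↔ supNorm x ≤ n := by
  unfold boxF
  rw [Fintype.mem_piFinset, supNorm_le_iff]
  refine forall_congr' fun j => ?_
  rw [Finset.mem_Icc]
  omega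

lemma mem_box_iff {x : PVert d} {n : ℕ} : x ∈ box d n ↔ supNorm x ≤ n := Iff.rfl

lemma supNorm_add_le (x y : PVert d) : supNorm (x + y) ≤ supNorm x + supNorm y := by
  rw [supNorm_le_iff]
  intro j
  have h1 : (x j).natAbs ≤ supNorm x := by
    unfold supNorm; exact Finset.le_sup (f := fun i => (x i).natAbs) (mem_univ j)
  have h2 : (y j).natAbs ≤ supNorm y := by
    unfold supNorm; exact Finset.le_sup (f := fun i => (y i).natAbs) (mem_univ j)
  have := Int.natAbs_add_le (x j) (y j)
  have hxy : (x + y) j = x j + y j := rfl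
  omega

lemma supNorm_neg (x : PVert d) : supNorm (-x) = supNorm x := by
  unfold supNorm
  refine Finset.sup_congr rfl fun j _ => ?_
  have : (-x) j = -(x j) := rfl
  rw [this, Int.natAbs_neg]

lemma supNorm_sub_norm (x y : PVert d) : supNorm x ≤ supNorm (x - y) + supNorm y := by
  have := supNorm_add_le (x - y) y
  rwa [sub_add_cancel] at this

lemma supNorm_unitVec_le (i : Fin d) : supNorm (unitVec d i) ≤ 1 := by
  rw [supNorm_le_iff]
  intro j
  unfold unitVec
  by_cases h : j = i <;> simp [h]

lemma openAdj_symm {ω : PConfig d} {x y : PVert d} (h : openAdj ω x y) : openAdj ω y x := by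
  obtain ⟨i, h | h⟩ := h
  · exact ⟨i, Or.inr h⟩
  · exact ⟨i, Or.inl h⟩

lemma openAdj_edge {ω : PConfig d} {x y : PVert d} (h : openAdj ω x y) :
    ∃ e : PEdge d, ω e = true ∧
      ((e.1 = x ∧ y = e.1 + unitVec d e.2) ∨ (e.1 = y ∧ x = e.1 + unitVec d e.2)) := by
  obtain ⟨i, ⟨h1, h2⟩ | ⟨h1, h2⟩⟩ := h
  · exact ⟨(x, i), h2, Or.inl ⟨rfl, h1⟩⟩
  · exact ⟨(y, i), h2, Or.inr ⟨rfl, h1⟩⟩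

lemma openAdj_dist {ω : PConfig d} {x y : PVert d} (h : openAdj ω x y) (z : PVert d) :
    supNorm (y - z) ≤ supNorm (x - z) + 1 := by
  obtain ⟨e, _, ⟨h1, h2⟩ | ⟨h1, h2⟩⟩ := openAdj_edge h
  · have : y - z = (x - z) + unitVec d e.2 := by rw [h2, h1]; abel
    rw [this]
    exact le_trans (supNorm_add_le _ _) (by
      have := supNorm_unitVec_le e.2; omega)
  · have hyz : y - z = (x - z) + (-(unitVec d e.2)) := by rw [h2, h1]; abel
    have h3 := supNorm_add_le (x - z) (-(unitVec d e.2))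
    rw [← hyz, supNorm_neg] at h3
    have := supNorm_unitVec_le e.2
    omega

lemma openAdj_mono {ω ω' : PConfig d} (hsub : ∀ e, ω e = true → ω' e = true)
    {x y : PVert d} (h : openAdj ω x y) : openAdj ω' x y := by
  obtain ⟨i, ⟨h1, h2⟩ | ⟨h1, h2⟩⟩ := h
  · exact ⟨i, Or.inl ⟨h1, hsub _ h2⟩⟩
  · exact ⟨i, Or.inr ⟨h1, hsub _ h2⟩⟩

lemma connIn_mono_cfg {ω ω' : PConfig d} (hsub : ∀ e, ω e = true → ω' e = true)
    {S : Set (PVert d)} {x y : PVert d} (h : connIn ω S x y) : connIn ω' S x y := by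
  refine Relation.ReflTransGen.mono (fun a b hab => ?_) _ _ h
  exact ⟨hab.1, hab.2.1, openAdj_mono hsub hab.2.2⟩

lemma connIn_mono_set {ω : PConfig d} {S T : Set (PVert d)} (hST : S ⊆ T)
    {x y : PVert d} (h : connIn ω S x y) : connIn ω T x y := by
  refine Relation.ReflTransGen.mono (fun a b hab => ?_) _ _ h
  exact ⟨hST hab.1, hST hab.2.1, hab.2.2⟩

lemma connIn_symm {ω : PConfig d} {S : Set (PVert d)} {x y : PVert d}
    (h : connIn ω S x y) : connIn ω S y x := by
  have hsym : Symmetric (fun a b : PVert d => a ∈ S ∧ b ∈ S ∧ openAdj ω a b) :=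
    fun a b hab => ⟨hab.2.1, hab.1, openAdj_symm hab.2.2⟩
  exact @Std.Symm.symm _ _ (@Relation.ReflTransGen.stdSymm _ _ ⟨hsym⟩) _ _ h

lemma connIn_trans {ω : PConfig d} {S : Set (PVert d)} {x y z : PVert d}
    (h1 : connIn ω S x y) (h2 : connIn ω S y z) : connIn ω S x z :=
  Relation.ReflTransGen.trans h1 h2

lemma edge_mem_boxEdges {n : ℕ} {e : PEdge d} (h1 : supNorm e.1 ≤ n)
    (h2 : supNorm (e.1 + unitVec d e.2) ≤ n) : e ∈ boxEdges d n := by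
  unfold boxEdges edgesIn
  rw [Finset.mem_filter, Finset.mem_product]
  exact ⟨⟨mem_boxF_iff.mpr h1, mem_univ _⟩, mem_boxF_iff.mpr h2⟩

lemma step_edge {ω : PConfig d} {n : ℕ} {a b : PVert d} (ha : a ∈ box d n)
    (hb : b ∈ box d n) (h : openAdj ω a b) :
    ∃ e ∈ boxEdges d n, ω e = true ∧
      ((e.1 = a ∧ b = e.1 + unitVec d e.2) ∨ (e.1 = b ∧ a = e.1 + unitVec d e.2)) := by
  obtain ⟨e, he, hor⟩ := openAdj_edge h
  refine ⟨e, ?_, he, hor⟩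
  rcases hor with ⟨h1, h2⟩ | ⟨h1, h2⟩
  · exact edge_mem_boxEdges (h1 ▸ ha) (h2 ▸ hb)
  · exact edge_mem_boxEdges (h1 ▸ hb) (h2 ▸ ha)

lemma openAdj_of_edge {ω : PConfig d} {e : PEdge d} (he : ω e = true) {a b : PVert d}
    (hor : (e.1 = a ∧ b = e.1 + unitVec d e.2) ∨ (e.1 = b ∧ a = e.1 + unitVec d e.2)) :
    openAdj ω a b := by
  rcases hor with ⟨h1, h2⟩ | ⟨h1, h2⟩
  · exact ⟨e.2, Or.inl ⟨by rw [h2, h1], by rw [← h1]; exact he⟩⟩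
  · exact ⟨e.2, Or.inr ⟨by rw [h2, h1], by rw [← h1]; exact he⟩⟩

lemma connIn_congr {ω ω' : PConfig d} {n : ℕ}
    (hagree : ∀ e ∈ boxEdges d n, ω e = ω' e) {x y : PVert d}
    (h : connIn ω (box d n) x y) : connIn ω' (box d n) x y := by
  refine Relation.ReflTransGen.mono (fun a b hab => ?_) _ _ h
  obtain ⟨ha, hb, hadj⟩ := hab
  obtain ⟨e, hmem, he, hor⟩ := step_edge ha hb hadj
  exact ⟨ha, hb, openAdj_of_edge (by rw [← hagree e hmem]; exact he) hor⟩

lemma zeroToBoundary_congr {ω ω' : PConfig d} {n : ℕ}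
    (hagree : ∀ e ∈ boxEdges d n, ω e = ω' e)
    (h : zeroToBoundary d n ω) : zeroToBoundary d n ω' := by
  obtain ⟨y, hy, hconn⟩ := h
  exact ⟨y, hy, connIn_congr hagree hconn⟩

lemma zeroToBoundary_mono {ω ω' : PConfig d} {n : ℕ}
    (hsub : ∀ e, ω e = true → ω' e = true)
    (h : zeroToBoundary d n ω) : zeroToBoundary d n ω' := by
  obtain ⟨y, hy, hconn⟩ := h
  exact ⟨y, hy, connIn_mono_cfg hsub hconn⟩

/-- Discrete intermediate value theorem along a reflexive-transitive path. -/
lemma rtg_ivt {V : Type*} {step : V → V → Prop} {g : V → ℕ}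
    (hstep : ∀ a b, step a b → g b ≤ g a + 1) {x y : V}
    (h : Relation.ReflTransGen step x y) :
    ∀ t, g x ≤ t → t ≤ g y →
      ∃ w, g w = t ∧
        Relation.ReflTransGen (fun a b => step a b ∧ g a ≤ t ∧ g b ≤ t) x w := by
  induction h using Relation.ReflTransGen.head_induction_on with
  | refl =>
      intro t h1 h2
      exact ⟨y, le_antisymm h2 h1 ▸ rfl, Relation.ReflTransGen.refl⟩
  | head hac hcy ih =>
      rename_i a c
      intro t h1 h2
      by_cases hat : g a = t
      · exact ⟨a, hat, Relation.ReflTransGen.refl⟩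
      · have hlt : g a < t := lt_of_le_of_ne h1 hat
        have hc : g c ≤ t := le_trans (hstep a c hac) (by omega)
        obtain ⟨w, hw, hpath⟩ := ih t hc h2
        exact ⟨w, hw, Relation.ReflTransGen.head ⟨hac, le_of_lt hlt, hc⟩ hpath⟩

/-- Translation of a configuration. -/
def trCfg (z : PVert d) (ω : PConfig d) : PConfig d := fun e => ω (e.1 + z, e.2)

lemma openAdj_trCfg {z : PVert d} {ω : PConfig d} {a b : PVert d}
    (h : openAdj ω (a + z) (b + z)) : openAdj (trCfg z ω) a b := by
  obtain ⟨i, ⟨h1, h2⟩ | ⟨h1, h2⟩⟩ := h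
  · refine ⟨i, Or.inl ⟨?_, h2⟩⟩
    have : b + z = a + unitVec d i + z := by rw [h1]; abel
    exact add_right_cancel this
  · refine ⟨i, Or.inr ⟨?_, h2⟩⟩
    have : a + z = b + unitVec d i + z := by rw [h1]; abel
    exact add_right_cancel this

end PercLemmas
section Explore

open Finset

variable {d : ℕ}

/-- Extend a partial edge configuration to a full configuration by closed edges. -/
def extCfg (E : Finset (PEdge d)) (η : {e // e ∈ E} → Bool) : PConfig d :=
  fun e => if h : e ∈ E then η ⟨e, h⟩ else false

/-- The configuration recording only the explored (queried) edges. -/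
def cfgOf (E : Finset (PEdge d)) (Q : Finset {e // e ∈ E}) (κ : {e // e ∈ E} → Bool) :
    PConfig d :=
  fun e => if h : e ∈ E then (if (⟨e, h⟩ : {e // e ∈ E}) ∈ Q then κ ⟨e, h⟩ else false)
    else false

/-- The open cluster of `∂Λ_k` (within `Λ_n`) in the configuration `ω`. -/
def clus (d n k : ℕ) (ω : PConfig d) (v : PVert d) : Prop :=
  ∃ u, supNorm u = k ∧ connIn ω (box d n) u v

/-- An edge touches the explored cluster. -/
def touches (d n k : ℕ) (ω : PConfig d) (e : PEdge d) : Prop :=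
  clus d n k ω e.1 ∨ clus d n k ω (e.1 + unitVec d e.2)

/-- The exploration decision tree of the cluster of `∂Λ_k` inside `Λ_n`. -/
noncomputable def explore (d n k : ℕ) :
    ℕ → Finset {e // e ∈ boxEdges d n} → ({e // e ∈ boxEdges d n} → Bool) →
      DT {e // e ∈ boxEdges d n}
  | 0, Q, κ => DT.leaf (if zeroToBoundary d n (cfgOf (boxEdges d n) Q κ) then true else false)
  | (m+1), Q, κ =>
      if h : ∃ i, i ∉ Q ∧ touches d n k (cfgOf (boxEdges d n) Q κ) i.val then
        DT.node h.choose
          (explore d n k m (insert h.choose Q) (Function.update κ h.choose false))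
          (explore d n k m (insert h.choose Q) (Function.update κ h.choose true))
      else DT.leaf (if zeroToBoundary d n (cfgOf (boxEdges d n) Q κ) then true else false)

variable {n k : ℕ}

lemma cfgOf_le_ext {Q : Finset {e // e ∈ boxEdges d n}} {κ η : {e // e ∈ boxEdges d n} → Bool}
    (hagree : ∀ i ∈ Q, κ i = η i) :
    ∀ e, cfgOf (boxEdges d n) Q κ e = true → extCfg (boxEdges d n) η e = true := by
  intro e he
  unfold cfgOf at he
  unfold extCfg
  by_cases h : e ∈ boxEdges d n
  · rw [dif_pos h] at he ⊢
    by_cases h2 : (⟨e, h⟩ : {e // e ∈ boxEdges d n}) ∈ Q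
    · rw [if_pos h2] at he
      rw [← hagree _ h2]; exact he
    · rw [if_neg h2] at he; exact absurd he (by simp)
  · rw [dif_neg h] at he
    exact absurd he (by simp)

lemma clus_mono {ω ω' : PConfig d} (hsub : ∀ e, ω e = true → ω' e = true) {v : PVert d}
    (h : clus d n k ω v) : clus d n k ω' v := by
  obtain ⟨u, hu, hc⟩ := h
  exact ⟨u, hu, connIn_mono_cfg hsub hc⟩

/-- On the explored cluster, the full path structure is already visible. -/
lemma walk_lemma {Q : Finset {e // e ∈ boxEdges d n}} {κ η : {e // e ∈ boxEdges d n} → Bool}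
    (hagree : ∀ i ∈ Q, κ i = η i)
    (hstop : ∀ i : {e // e ∈ boxEdges d n}, i ∉ Q →
      ¬ touches d n k (cfgOf (boxEdges d n) Q κ) i.val)
    {u y' : PVert d} (hpath : connIn (extCfg (boxEdges d n) η) (box d n) u y')
    (hu : clus d n k (cfgOf (boxEdges d n) Q κ) u) :
    connIn (cfgOf (boxEdges d n) Q κ) (box d n) u y' := by
  induction hpath using Relation.ReflTransGen.head_induction_on with
  | refl => exact Relation.ReflTransGen.refl
  | head hac hcy ih =>
      rename_i a c
      obtain ⟨ha, hc, hadj⟩ := hac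
      obtain ⟨e, hmem, hopen, hor⟩ := step_edge ha hc hadj
      have hiQ : (⟨e, hmem⟩ : {e // e ∈ boxEdges d n}) ∈ Q := by
        by_contra hnot
        refine hstop _ hnot ?_
        rcases hor with ⟨h1, _⟩ | ⟨h1, h2⟩
        · exact Or.inl (by rw [h1]; exact hu)
        · exact Or.inr (by rw [← h2]; exact hu)
      have hcfg : cfgOf (boxEdges d n) Q κ e = true := by
        unfold cfgOf
        rw [dif_pos hmem, if_pos hiQ, hagree _ hiQ]
        have : extCfg (boxEdges d n) η e = η ⟨e, hmem⟩ := by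
          unfold extCfg; rw [dif_pos hmem]
        rw [← this]; exact hopen
      have hstep' : openAdj (cfgOf (boxEdges d n) Q κ) a c := openAdj_of_edge hcfg hor
      have hclusc : clus d n k (cfgOf (boxEdges d n) Q κ) c := by
        obtain ⟨u0, hu0, hp0⟩ := hu
        exact ⟨u0, hu0, Relation.ReflTransGen.tail hp0 ⟨ha, hc, hstep'⟩⟩
      exact Relation.ReflTransGen.head ⟨ha, hc, hstep'⟩ (ih hclusc)

lemma supNorm_zero : supNorm (0 : PVert d) = 0 := by
  have h : supNorm (0 : PVert d) ≤ 0 := supNorm_le_iff.mpr fun j => by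
    show ((0 : PVert d) j).natAbs ≤ 0
    have : (0 : PVert d) j = 0 := rfl
    rw [this]; rfl
  omega

/-- Stopping correctness: once no unexplored edge touches the explored cluster,
the event `{0 ↔ ∂Λ_n}` is determined. -/
lemma stop_correct {Q : Finset {e // e ∈ boxEdges d n}} {κ η : {e // e ∈ boxEdges d n} → Bool}
    (hkn : k ≤ n)
    (hagree : ∀ i ∈ Q, κ i = η i)
    (hstop : ∀ i : {e // e ∈ boxEdges d n}, i ∉ Q →
      ¬ touches d n k (cfgOf (boxEdges d n) Q κ) i.val) :
    (zeroToBoundary d n (extCfg (boxEdges d n) η)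
      ↔ zeroToBoundary d n (cfgOf (boxEdges d n) Q κ)) := by
  constructor
  · rintro ⟨y, hy, hpath⟩
    -- find a vertex of norm exactly k on the path
    have hstep : ∀ a b : PVert d,
        (a ∈ box d n ∧ b ∈ box d n ∧ openAdj (extCfg (boxEdges d n) η) a b) →
          supNorm b ≤ supNorm a + 1 := by
      intro a b hab
      have := openAdj_dist hab.2.2 (0 : PVert d)
      rwa [sub_zero, sub_zero] at this
    obtain ⟨v, hv, hpre⟩ := rtg_ivt hstep hpath k (by rw [supNorm_zero]; omega)
      (by rw [hy]; exact hkn)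
    have hpre' : connIn (extCfg (boxEdges d n) η) (box d n) 0 v :=
      Relation.ReflTransGen.mono (fun a b hab => hab.1) _ _ hpre
    have hvclus : clus d n k (cfgOf (boxEdges d n) Q κ) v := ⟨v, hv, Relation.ReflTransGen.refl⟩
    have hv0 : connIn (cfgOf (boxEdges d n) Q κ) (box d n) v 0 :=
      walk_lemma hagree hstop (connIn_symm hpre') hvclus
    have hvy : connIn (cfgOf (boxEdges d n) Q κ) (box d n) v y :=
      walk_lemma hagree hstop (connIn_trans (connIn_symm hpre') hpath) hvclus
    exact ⟨y, hy, connIn_trans (connIn_symm hv0) hvy⟩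
  · rintro ⟨y, hy, hpath⟩
    exact ⟨y, hy, connIn_mono_cfg (cfgOf_le_ext hagree) hpath⟩

end Explore
section ExploreEval

open Finset

variable {d n k : ℕ}

lemma explore_eval (hkn : k ≤ n) :
    ∀ (m : ℕ) (Q : Finset {e // e ∈ boxEdges d n}) (κ η : {e // e ∈ boxEdges d n} → Bool),
      ((univ : Finset {e // e ∈ boxEdges d n}) \ Q).card ≤ m →
      (∀ i ∈ Q, κ i = η i) →
      (explore d n k m Q κ).eval η
        = (if zeroToBoundary d n (extCfg (boxEdges d n) η) then true else false) := by
  intro m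
  induction m with
  | zero =>
      intro Q κ η hcard hagree
      have hQ : (univ : Finset {e // e ∈ boxEdges d n}) ⊆ Q := by
        rw [← Finset.sdiff_eq_empty_iff_subset]
        exact Finset.card_eq_zero.mp (le_antisymm hcard (Nat.zero_le _))
      have hcfg : cfgOf (boxEdges d n) Q κ = extCfg (boxEdges d n) η := by
        funext e
        unfold cfgOf extCfg
        by_cases h : e ∈ boxEdges d n
        · rw [dif_pos h, dif_pos h, if_pos (hQ (mem_univ _)), hagree _ (hQ (mem_univ _))]
        · rw [dif_neg h, dif_neg h]
      show (DT.leaf (if zeroToBoundary d n (cfgOf (boxEdges d n) Q κ) then true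
          else false)).eval η = _
      rw [DT.eval_leaf, hcfg]
  | succ m ih =>
      intro Q κ η hcard hagree
      by_cases h : ∃ i, i ∉ Q ∧ touches d n k (cfgOf (boxEdges d n) Q κ) i.val
      · have hspec := h.choose_spec
        set i := h.choose with hi
        have hexp : explore d n k (m+1) Q κ
            = DT.node i (explore d n k m (insert i Q) (Function.update κ i false))
                (explore d n k m (insert i Q) (Function.update κ i true)) := by
          show (if h : _ then _ else _) = _
          rw [dif_pos h]
        have hcard' : ((univ : Finset {e // e ∈ boxEdges d n}) \ insert i Q).card ≤ m := by
          have hmem : i ∈ (univ : Finset {e // e ∈ boxEdges d n}) \ Q := by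
            rw [Finset.mem_sdiff]; exact ⟨mem_univ _, hspec.1⟩
          have heq : (univ : Finset {e // e ∈ boxEdges d n}) \ insert i Q
              = ((univ : Finset {e // e ∈ boxEdges d n}) \ Q).erase i := by
            ext j
            simp only [Finset.mem_sdiff, Finset.mem_insert, Finset.mem_erase, Finset.mem_univ,
              true_and]
            tauto
          rw [heq, Finset.card_erase_of_mem hmem]
          have hle := Finset.card_le_card (Finset.sdiff_subset (s := (univ : Finset {e // e ∈ boxEdges d n})) (t := Q))
          omega
        have hagree' : ∀ b : Bool, b = η i →
            ∀ j ∈ insert i Q, Function.update κ i b j = η j := by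
          intro b hb j hj
          rcases Finset.mem_insert.mp hj with rfl | hjQ
          · rw [Function.update_self]; exact hb
          · by_cases hji : j = i
            · subst hji; rw [Function.update_self]; exact hb
            · rw [Function.update_of_ne hji]; exact hagree _ hjQ
        rw [hexp, DT.eval_node]
        cases hηi : η i with
        | false =>
            simp only [Bool.false_eq_true, if_false]
            exact ih _ _ _ hcard' (hagree' false hηi.symm)
        | true =>
            simp only [if_true]
            exact ih _ _ _ hcard' (hagree' true hηi.symm)
      · have hexp : explore d n k (m+1) Q κ
            = DT.leaf (if zeroToBoundary d n (cfgOf (boxEdges d n) Q κ) then true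
                else false) := by
          show (if h : _ then _ else _) = _
          rw [dif_neg h]
        rw [hexp, DT.eval_leaf]
        have hiff := stop_correct hkn hagree
          (fun i hi ht => h ⟨i, hi, ht⟩)
        by_cases hz : zeroToBoundary d n (extCfg (boxEdges d n) η)
        · rw [if_pos hz, if_pos (hiff.mp hz)]
        · rw [if_neg hz, if_neg (fun hc => hz (hiff.mpr hc))]

lemma explore_rev :
    ∀ (m : ℕ) (Q : Finset {e // e ∈ boxEdges d n}) (κ η : {e // e ∈ boxEdges d n} → Bool)
      (i : {e // e ∈ boxEdges d n}),
      (∀ j ∈ Q, κ j = η j) →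
      (explore d n k m Q κ).rev η i →
      touches d n k (extCfg (boxEdges d n) η) i.val := by
  intro m
  induction m with
  | zero =>
      intro Q κ η i hagree hrev
      exact absurd hrev (by
        show ¬ (DT.leaf _).rev η i
        simp)
  | succ m ih =>
      intro Q κ η i hagree hrev
      by_cases h : ∃ j, j ∉ Q ∧ touches d n k (cfgOf (boxEdges d n) Q κ) j.val
      · have hspec := h.choose_spec
        set i0 := h.choose with hi0
        have hexp : explore d n k (m+1) Q κ
            = DT.node i0 (explore d n k m (insert i0 Q) (Function.update κ i0 false))
                (explore d n k m (insert i0 Q) (Function.update κ i0 true)) := by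
          show (if h : _ then _ else _) = _
          rw [dif_pos h]
        rw [hexp, DT.rev_node] at hrev
        have hagree' : ∀ b : Bool, b = η i0 →
            ∀ j ∈ insert i0 Q, Function.update κ i0 b j = η j := by
          intro b hb j hj
          rcases Finset.mem_insert.mp hj with rfl | hjQ
          · rw [Function.update_self]; exact hb
          · by_cases hji : j = i0
            · subst hji; rw [Function.update_self]; exact hb
            · rw [Function.update_of_ne hji]; exact hagree _ hjQ
        rcases hrev with rfl | hrev2
        · -- i is the queried edge: it touches the explored cluster
          have htou := hspec.2
          rcases htou with hc | hc
          · exact Or.inl (clus_mono (cfgOf_le_ext hagree) hc)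
          · exact Or.inr (clus_mono (cfgOf_le_ext hagree) hc)
        · cases hηi : η i0 with
          | false =>
              rw [hηi] at hrev2
              simp only [Bool.false_eq_true, if_false] at hrev2
              exact ih _ _ _ _ (hagree' false hηi.symm) hrev2
          | true =>
              rw [hηi] at hrev2
              simp only [if_true] at hrev2
              exact ih _ _ _ _ (hagree' true hηi.symm) hrev2
      · have hexp : explore d n k (m+1) Q κ
            = DT.leaf (if zeroToBoundary d n (cfgOf (boxEdges d n) Q κ) then true
                else false) := by
          show (if h : _ then _ else _) = _
          rw [dif_neg h]
        rw [hexp] at hrev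
        exact absurd hrev (by simp)

end ExploreEval
section Translate

open Finset

variable {d n k : ℕ} {p : ℝ}

/-- If `z` lies in the cluster of `∂Λ_k`, then in the configuration translated by `z`
the origin is connected to `∂Λ_r`, where `r = |k - ‖z‖|`. -/
lemma clus_to_ztb {ω : PConfig d} {z : PVert d} (h : clus d n k ω z) :
    zeroToBoundary d (((k : ℤ) - (supNorm z : ℤ)).natAbs) (trCfg z ω) := by
  obtain ⟨u, hu, hpath⟩ := h
  set r := (((k : ℤ) - (supNorm z : ℤ)).natAbs) with hr
  have hpath' : connIn ω (box d n) z u := connIn_symm hpath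
  have hstep : ∀ a b : PVert d,
      (a ∈ box d n ∧ b ∈ box d n ∧ openAdj ω a b) →
        supNorm (b - z) ≤ supNorm (a - z) + 1 :=
    fun a b hab => openAdj_dist hab.2.2 z
  have hgz : supNorm (z - z) ≤ r := by
    have : z - z = 0 := by abel
    rw [this, supNorm_zero]
    omega
  have hgu : r ≤ supNorm (u - z) := by
    have h1 : supNorm u ≤ supNorm (u - z) + supNorm z := supNorm_sub_norm u z
    have h2 : supNorm z ≤ supNorm (z - u) + supNorm u := supNorm_sub_norm z u
    have h3 : supNorm (z - u) = supNorm (u - z) := by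
      have : z - u = -(u - z) := by abel
      rw [this, supNorm_neg]
    rw [h3] at h2
    rw [hu] at h1 h2
    omega
  obtain ⟨w, hw, hpre⟩ := rtg_ivt hstep hpath' r hgz hgu
  refine ⟨w - z, hw, ?_⟩
  have h0 : (0 : PVert d) = z - z := by abel
  rw [h0]
  refine Relation.ReflTransGen.lift (fun v => v - z) (fun a b hab => ?_) _ _ hpre
  obtain ⟨⟨_, _, hadj⟩, hga, hgb⟩ := hab
  refine ⟨hga, hgb, ?_⟩
  refine openAdj_trCfg ?_
  rwa [sub_add_cancel, sub_add_cancel]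

/-- Pull-back comparison: the probability of a monotone event evaluated on an
injectively relabelled, partially-zeroed configuration is at most its probability. -/
lemma pull_le (hp : p ∈ Set.Icc (0:ℝ) 1) {E F : Finset (PEdge d)} (σ : PEdge d → PEdge d)
    (hσ : Function.Injective σ) (B : PConfig d → Prop)
    (hdep : ∀ ξ ξ' : PConfig d, (∀ e ∈ F, ξ e = ξ' e) → B ξ → B ξ')
    (hmono : ∀ ξ ξ' : PConfig d, (∀ e, ξ e = true → ξ' e = true) → B ξ → B ξ') :
    ∑ η : {e // e ∈ E} → Bool, Wt p η * (if B (fun e => extCfg E η (σ e)) then (1:ℝ) else 0)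
      ≤ ∑ ζ : {e // e ∈ F} → Bool, Wt p ζ * (if B (extCfg F ζ) then (1:ℝ) else 0) := by
  classical
  let α := {e : {e // e ∈ F} // σ e.val ∈ E}
  let ρ : α ↪ {e // e ∈ E} :=
    ⟨fun a => ⟨σ a.val.val, a.prop⟩, by
      rintro ⟨⟨a, ha⟩, ha2⟩ ⟨⟨b, hb⟩, hb2⟩ hab
      simp only [Subtype.mk.injEq] at hab
      have := hσ hab
      simp [this]⟩
  let Ext : (α → Bool) → ({e // e ∈ F} → Bool) := fun ζα e =>
    if h : σ e.val ∈ E then ζα ⟨e, h⟩ else false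
  have hagree : ∀ η : {e // e ∈ E} → Bool,
      (if B (fun e => extCfg E η (σ e)) then (1:ℝ) else 0)
        = (if B (extCfg F (Ext (fun a => η (ρ a)))) then (1:ℝ) else 0) := by
    intro η
    have hag : ∀ e ∈ F, (fun e => extCfg E η (σ e)) e = extCfg F (Ext (fun a => η (ρ a))) e := by
      intro e he
      show extCfg E η (σ e) = extCfg F (Ext (fun a => η (ρ a))) e
      unfold extCfg
      rw [dif_pos he]
      show (if h : σ e ∈ E then η ⟨σ e, h⟩ else false) = Ext (fun a => η (ρ a)) ⟨e, he⟩
      by_cases h : σ e ∈ E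
      · rw [dif_pos h]
        show η ⟨σ e, h⟩ = Ext (fun a => η (ρ a)) ⟨e, he⟩
        simp only [Ext]
        rw [dif_pos h]
        rfl
      · rw [dif_neg h]
        show false = Ext (fun a => η (ρ a)) ⟨e, he⟩
        simp only [Ext]
        rw [dif_neg h]
    by_cases hb : B (fun e => extCfg E η (σ e))
    · rw [if_pos hb, if_pos (hdep _ _ hag hb)]
    · rw [if_neg hb, if_neg (fun hc => hb (hdep _ _ (fun e he => (hag e he).symm) hc))]
  calc ∑ η : {e // e ∈ E} → Bool, Wt p η * (if B (fun e => extCfg E η (σ e)) then (1:ℝ) else 0)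
      = ∑ η : {e // e ∈ E} → Bool, Wt p η
          * (if B (extCfg F (Ext (fun a => η (ρ a)))) then (1:ℝ) else 0) :=
        Finset.sum_congr rfl fun η _ => by rw [hagree η]
    _ = ∑ ζα : α → Bool, Wt p ζα * (if B (extCfg F (Ext ζα)) then (1:ℝ) else 0) := by
        exact marg ρ (fun ζα => if B (extCfg F (Ext ζα)) then (1:ℝ) else 0)
    _ = ∑ ζ : {e // e ∈ F} → Bool, Wt p ζ
          * (if B (extCfg F (Ext (fun a => ζ a.val))) then (1:ℝ) else 0) := by
        refine (marg ⟨Subtype.val, Subtype.val_injective⟩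
          (fun ζα => if B (extCfg F (Ext ζα)) then (1:ℝ) else 0)).symm
    _ ≤ ∑ ζ : {e // e ∈ F} → Bool, Wt p ζ * (if B (extCfg F ζ) then (1:ℝ) else 0) := by
        refine Finset.sum_le_sum fun ζ _ => ?_
        refine mul_le_mul_of_nonneg_left ?_ (Wt_nonneg hp ζ)
        by_cases hb : B (extCfg F (Ext (fun a => ζ a.val)))
        · have hsub : ∀ e, extCfg F (Ext (fun a => ζ a.val)) e = true → extCfg F ζ e = true := by
            intro e he
            unfold extCfg at he ⊢
            by_cases h : e ∈ F
            · rw [dif_pos h] at he ⊢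
              simp only [Ext] at he
              by_cases h2 : σ e ∈ E
              · rw [dif_pos h2] at he; exact he
              · rw [dif_neg h2] at he; exact absurd he (by simp)
            · rw [dif_neg h] at he; exact absurd he (by simp)
          rw [if_pos (hmono _ _ hsub hb)]
          split <;> norm_num
        · rw [if_neg hb]
          split <;> norm_num

end Translate
section RevBound

open Finset

variable {d n k : ℕ} {p : ℝ}

lemma theta_def (j : ℕ) : theta d p j
    = ∑ η : {e // e ∈ boxEdges d j} → Bool,
        Wt p η * (if zeroToBoundary d j (extCfg (boxEdges d j) η) then (1:ℝ) else 0) := rfl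

lemma theta_nonneg (hp : p ∈ Set.Icc (0:ℝ) 1) (j : ℕ) : 0 ≤ theta d p j := by
  rw [theta_def]
  refine Finset.sum_nonneg fun η _ => mul_nonneg (Wt_nonneg hp η) (by positivity)

lemma theta_le_one (hp : p ∈ Set.Icc (0:ℝ) 1) (j : ℕ) : theta d p j ≤ 1 := by
  rw [theta_def]
  calc ∑ η : {e // e ∈ boxEdges d j} → Bool,
        Wt p η * (if zeroToBoundary d j (extCfg (boxEdges d j) η) then (1:ℝ) else 0)
      ≤ ∑ η : {e // e ∈ boxEdges d j} → Bool, Wt p η := by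
        refine Finset.sum_le_sum fun η _ => ?_
        have h2 : (if zeroToBoundary d j (extCfg (boxEdges d j) η) then (1:ℝ) else 0) ≤ 1 := by
          split <;> norm_num
        nlinarith [Wt_nonneg hp η]
    _ = 1 := Wt_sum_one

lemma theta_zero (hp : p ∈ Set.Icc (0:ℝ) 1) : theta d p 0 = 1 := by
  rw [theta_def]
  have h : ∀ η : {e // e ∈ boxEdges d 0} → Bool,
      zeroToBoundary d 0 (extCfg (boxEdges d 0) η) :=
    fun η => ⟨0, supNorm_zero, Relation.ReflTransGen.refl⟩
  calc ∑ η : {e // e ∈ boxEdges d 0} → Bool,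
        Wt p η * (if zeroToBoundary d 0 (extCfg (boxEdges d 0) η) then (1:ℝ) else 0)
      = ∑ η : {e // e ∈ boxEdges d 0} → Bool, Wt p η :=
        Finset.sum_congr rfl fun η _ => by rw [if_pos (h η), mul_one]
    _ = 1 := Wt_sum_one

/-- Probability that a given vertex is in the explored cluster, bounded by `θ_r`. -/
lemma clus_prob_le (hp : p ∈ Set.Icc (0:ℝ) 1) (z : PVert d) :
    ∑ η : {e // e ∈ boxEdges d n} → Bool,
        Wt p η * (if clus d n k (extCfg (boxEdges d n) η) z then (1:ℝ) else 0)
      ≤ theta d p (((k : ℤ) - (supNorm z : ℤ)).natAbs) := by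
  set r := (((k : ℤ) - (supNorm z : ℤ)).natAbs) with hr
  have hσ : Function.Injective (fun e : PEdge d => (e.1 + z, e.2)) := by
    rintro ⟨a1, a2⟩ ⟨b1, b2⟩ hab
    simp only [Prod.mk.injEq] at hab
    have h1 : a1 = b1 := add_right_cancel hab.1
    simp [h1, hab.2]
  have step1 : ∀ η : {e // e ∈ boxEdges d n} → Bool,
      (if clus d n k (extCfg (boxEdges d n) η) z then (1:ℝ) else 0)
        ≤ (if zeroToBoundary d r
            (fun e => extCfg (boxEdges d n) η (e.1 + z, e.2)) then (1:ℝ) else 0) := by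
    intro η
    by_cases h : clus d n k (extCfg (boxEdges d n) η) z
    · have h2 : zeroToBoundary d r (fun e => extCfg (boxEdges d n) η (e.1 + z, e.2)) :=
        clus_to_ztb h
      rw [if_pos h, if_pos h2]
    · rw [if_neg h]; positivity
  calc ∑ η : {e // e ∈ boxEdges d n} → Bool,
        Wt p η * (if clus d n k (extCfg (boxEdges d n) η) z then (1:ℝ) else 0)
      ≤ ∑ η : {e // e ∈ boxEdges d n} → Bool,
          Wt p η * (if zeroToBoundary d r
            (fun e => extCfg (boxEdges d n) η (e.1 + z, e.2)) then (1:ℝ) else 0) :=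
        Finset.sum_le_sum fun η _ =>
          mul_le_mul_of_nonneg_left (step1 η) (Wt_nonneg hp η)
    _ ≤ ∑ ζ : {e // e ∈ boxEdges d r} → Bool,
          Wt p ζ * (if zeroToBoundary d r (extCfg (boxEdges d r) ζ) then (1:ℝ) else 0) :=
        pull_le hp (fun e : PEdge d => (e.1 + z, e.2)) hσ (zeroToBoundary d r)
          (fun ξ ξ' hag hb => zeroToBoundary_congr hag hb)
          (fun ξ ξ' hsub hb => zeroToBoundary_mono hsub hb)
    _ = theta d p r := (theta_def r).symm

/-- Revealment bound for the exploration tree. -/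
lemma revd_explore_le (hp : p ∈ Set.Ioo (0:ℝ) 1) (m : ℕ)
    (i : {e // e ∈ boxEdges d n}) :
    revd p (explore d n k m ∅ (fun _ => false)) i
      ≤ theta d p (((k : ℤ) - (supNorm i.val.1 : ℤ)).natAbs)
        + theta d p (((k : ℤ) - (supNorm (i.val.1 + unitVec d i.val.2) : ℤ)).natAbs) := by
  have hp' : p ∈ Set.Icc (0:ℝ) 1 := ⟨le_of_lt hp.1, le_of_lt hp.2⟩
  have hpt : ∀ η : {e // e ∈ boxEdges d n} → Bool,
      (if (explore d n k m ∅ (fun _ => false)).rev η i then (1:ℝ) else 0)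
        ≤ (if clus d n k (extCfg (boxEdges d n) η) i.val.1 then (1:ℝ) else 0)
          + (if clus d n k (extCfg (boxEdges d n) η) (i.val.1 + unitVec d i.val.2)
              then (1:ℝ) else 0) := by
    intro η
    by_cases h : (explore d n k m ∅ (fun _ => false)).rev η i
    · have htou := explore_rev m ∅ (fun _ => false) η i (by simp) h
      rcases htou with hc | hc
      · rw [if_pos h, if_pos hc]
        have : (0:ℝ) ≤ (if clus d n k (extCfg (boxEdges d n) η)
            (i.val.1 + unitVec d i.val.2) then (1:ℝ) else 0) := by positivity
        linarith
      · rw [if_pos h, if_pos hc]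
        have : (0:ℝ) ≤ (if clus d n k (extCfg (boxEdges d n) η) i.val.1
            then (1:ℝ) else 0) := by positivity
        linarith
    · rw [if_neg h]; positivity
  calc revd p (explore d n k m ∅ (fun _ => false)) i
      ≤ ∑ η : {e // e ∈ boxEdges d n} → Bool, Wt p η *
          ((if clus d n k (extCfg (boxEdges d n) η) i.val.1 then (1:ℝ) else 0)
            + (if clus d n k (extCfg (boxEdges d n) η) (i.val.1 + unitVec d i.val.2)
                then (1:ℝ) else 0)) := by
        unfold revd
        exact Finset.sum_le_sum fun η _ =>
          mul_le_mul_of_nonneg_left (hpt η) (Wt_nonneg hp' η)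
    _ = (∑ η : {e // e ∈ boxEdges d n} → Bool, Wt p η *
          (if clus d n k (extCfg (boxEdges d n) η) i.val.1 then (1:ℝ) else 0))
        + ∑ η : {e // e ∈ boxEdges d n} → Bool, Wt p η *
          (if clus d n k (extCfg (boxEdges d n) η) (i.val.1 + unitVec d i.val.2)
            then (1:ℝ) else 0) := by
        rw [← Finset.sum_add_distrib]
        exact Finset.sum_congr rfl fun η _ => by ring
    _ ≤ _ := add_le_add (clus_prob_le hp' _) (clus_prob_le hp' _)

end RevBound
section InfluenceId

open Finset

variable {d n : ℕ} {p : ℝ}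

/-- The indicator Boolean function of the event `{0 ↔ ∂Λ_n}`. -/
noncomputable def fB (d n : ℕ) : ({e // e ∈ boxEdges d n} → Bool) → Bool :=
  fun η => if zeroToBoundary d n (extCfg (boxEdges d n) η) then true else false

lemma flip_ext (η : {e // e ∈ boxEdges d n} → Bool) (i : {e // e ∈ boxEdges d n}) :
    Function.update (extCfg (boxEdges d n) η) i.val (!(extCfg (boxEdges d n) η i.val))
      = extCfg (boxEdges d n) (Function.update η i (!(η i))) := by
  funext e
  by_cases he : e = i.val
  · subst he
    rw [Function.update_self]
    unfold extCfg
    rw [dif_pos i.prop, dif_pos i.prop, Subtype.coe_eta, Function.update_self]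
  · rw [Function.update_of_ne he]
    unfold extCfg
    by_cases h : e ∈ boxEdges d n
    · rw [dif_pos h, dif_pos h]
      rw [Function.update_of_ne (fun hc => he (congrArg Subtype.val hc))]
    · rw [dif_neg h, dif_neg h]

lemma abs_ind_eq (A1 A2 : Prop) :
    |(if A1 then (1:ℝ) else 0) - (if A2 then (1:ℝ) else 0)|
      = nq (if A1 then true else false) (if A2 then true else false) := by
  by_cases h1 : A1 <;> by_cases h2 : A2 <;> simp [h1, h2, nq] <;> norm_num

lemma cylInfluence_eq (i : {e // e ∈ boxEdges d n}) :
    cylInfluence d p (boxEdges d n) (zeroToBoundary d n) i.val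
      = ∑ η : {e // e ∈ boxEdges d n} → Bool,
          Wt p η * nq (fB d n η) (fB d n (Function.update η i (!(η i)))) := by
  unfold cylInfluence
  refine Finset.sum_congr rfl fun η _ => ?_
  have hprod : (∏ e' : {e' // e' ∈ boxEdges d n}, if η e' then p else 1 - p) = Wt p η := rfl
  rw [hprod]
  congr 1
  have hext : (fun e => if h : e ∈ boxEdges d n then η ⟨e, h⟩ else false)
      = extCfg (boxEdges d n) η := rfl
  have hext2 : (if h : i.val ∈ boxEdges d n then η ⟨i.val, h⟩ else false)
      = extCfg (boxEdges d n) η i.val := rfl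
  rw [hext, hext2, flip_ext η i]
  exact abs_ind_eq _ _

lemma rInf_eq_influence (hp : p ∈ Set.Icc (0:ℝ) 1) (i : {e // e ∈ boxEdges d n}) :
    rInf p (fB d n) i
      = 2 * (p * (1 - p)) * cylInfluence d p (boxEdges d n) (zeroToBoundary d n) i.val := by
  set f := fB d n with hf
  set Δ : ({e // e ∈ boxEdges d n} → Bool) → ℝ :=
    fun η => nq (f (Function.update η i true)) (f (Function.update η i false)) with hΔ
  have c2 : ∀ (η : {e // e ∈ boxEdges d n} → Bool) (b : Bool), Δ (Function.update η i b) = Δ η := by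
    intro η b
    simp only [hΔ, Function.update_idem]
  have c1 : ∀ η : {e // e ∈ boxEdges d n} → Bool,
      bw p true * nq (f η) (f (Function.update η i true))
        + bw p false * nq (f η) (f (Function.update η i false))
      = bw p (!(η i)) * Δ η := by
    intro η
    cases hηi : η i with
    | true =>
        have hself : Function.update η i true = η := by
          rw [← hηi]; exact Function.update_eq_self i η
        rw [hself, nq_self, mul_zero, zero_add]
        simp only [hΔ, hself, hηi, Bool.not_true]
    | false =>
        have hself : Function.update η i false = η := by
          rw [← hηi]; exact Function.update_eq_self i η
        rw [hself, nq_self, mul_zero, add_zero]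
        simp only [hΔ, hself, hηi, Bool.not_false]
        rw [nq_comm]
  have c3 : ∀ η : {e // e ∈ boxEdges d n} → Bool,
      nq (f η) (f (Function.update η i (!(η i)))) = Δ η := by
    intro η
    cases hηi : η i with
    | true =>
        have hself : Function.update η i true = η := by
          rw [← hηi]; exact Function.update_eq_self i η
        simp only [hΔ, hηi, Bool.not_true, hself]
    | false =>
        have hself : Function.update η i false = η := by
          rw [← hηi]; exact Function.update_eq_self i η
        simp only [hΔ, hηi, Bool.not_false, hself]
        rw [nq_comm]
  calc rInf p f i
      = ∑ η : {e // e ∈ boxEdges d n} → Bool, Wt p η * (bw p (!(η i)) * Δ η) := by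
        unfold rInf
        exact Finset.sum_congr rfl fun η _ => by rw [c1 η]
    _ = ∑ η : {e // e ∈ boxEdges d n} → Bool, Wt p η *
        (bw p true * (bw p (!(true : Bool)) * Δ η) + bw p false * (bw p (!(false : Bool)) * Δ η)) := by
        rw [resample_eq i (fun η => bw p (!(η i)) * Δ η)]
        refine Finset.sum_congr rfl fun η _ => ?_
        rw [c2 η true, c2 η false, Function.update_self, Function.update_self]
    _ = 2 * (p * (1 - p)) * ∑ η : {e // e ∈ boxEdges d n} → Bool, Wt p η * Δ η := by
        rw [Finset.mul_sum]
        refine Finset.sum_congr rfl fun η _ => ?_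
        simp only [bw, Bool.not_true, Bool.not_false, if_true, Bool.false_eq_true, if_false]
        ring
    _ = 2 * (p * (1 - p)) * cylInfluence d p (boxEdges d n) (zeroToBoundary d n) i.val := by
        rw [cylInfluence_eq i]
        congr 1
        exact Finset.sum_congr rfl fun η _ => by rw [c3 η]

lemma influence_nonneg (hp : p ∈ Set.Icc (0:ℝ) 1) (i : {e // e ∈ boxEdges d n}) :
    0 ≤ cylInfluence d p (boxEdges d n) (zeroToBoundary d n) i.val := by
  rw [cylInfluence_eq i]
  exact Finset.sum_nonneg fun η _ => mul_nonneg (Wt_nonneg hp η) (nq_nonneg _ _)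

lemma theta_fB : theta d p n
    = ∑ η : {e // e ∈ boxEdges d n} → Bool, Wt p η * (if fB d n η then (1:ℝ) else 0) := by
  rw [theta_def]
  refine Finset.sum_congr rfl fun η _ => ?_
  congr 1
  unfold fB
  by_cases h : zeroToBoundary d n (extCfg (boxEdges d n) η) <;> simp [h]

lemma DD_eq (hp : p ∈ Set.Icc (0:ℝ) 1) :
    DD p (fB d n) (fB d n) = 2 * theta d p n * (1 - theta d p n) := by
  set f := fB d n with hf
  set θ := theta d p n with hθ
  have hnq : ∀ a b : Bool, nq a b
      = (if a then (1:ℝ) else 0) + (if b then (1:ℝ) else 0)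
        - 2 * ((if a then (1:ℝ) else 0) * (if b then (1:ℝ) else 0)) := by
    intro a b; cases a <;> cases b <;> simp [nq] <;> norm_num
  have hθf : ∑ η : {e // e ∈ boxEdges d n} → Bool, Wt p η * (if f η then (1:ℝ) else 0) = θ :=
    theta_fB.symm
  have hinner : ∀ η : {e // e ∈ boxEdges d n} → Bool,
      (∑ η' : {e // e ∈ boxEdges d n} → Bool, Wt p η' * nq (f η) (f η'))
        = (if f η then (1:ℝ) else 0) * (1 - 2 * θ) + θ := by
    intro η
    calc (∑ η' : {e // e ∈ boxEdges d n} → Bool, Wt p η' * nq (f η) (f η'))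
        = ∑ η' : {e // e ∈ boxEdges d n} → Bool,
            (Wt p η' * (if f η then (1:ℝ) else 0)
              + (1 - 2 * (if f η then (1:ℝ) else 0)) * (Wt p η' * (if f η' then (1:ℝ) else 0))) := by
          refine Finset.sum_congr rfl fun η' _ => ?_
          rw [hnq]
          ring
      _ = (∑ η' : {e // e ∈ boxEdges d n} → Bool, Wt p η') * (if f η then (1:ℝ) else 0)
            + (1 - 2 * (if f η then (1:ℝ) else 0))
              * ∑ η' : {e // e ∈ boxEdges d n} → Bool, Wt p η' * (if f η' then (1:ℝ) else 0) := by
          rw [Finset.sum_add_distrib, ← Finset.sum_mul, ← Finset.mul_sum]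
      _ = (if f η then (1:ℝ) else 0) * (1 - 2 * θ) + θ := by
          rw [Wt_sum_one, hθf]
          ring
  calc DD p f f
      = ∑ η : {e // e ∈ boxEdges d n} → Bool,
          Wt p η * ((if f η then (1:ℝ) else 0) * (1 - 2 * θ) + θ) := by
        unfold DD
        exact Finset.sum_congr rfl fun η _ => by rw [hinner η]
    _ = (∑ η : {e // e ∈ boxEdges d n} → Bool, Wt p η * (if f η then (1:ℝ) else 0)) * (1 - 2*θ)
          + θ * ∑ η : {e // e ∈ boxEdges d n} → Bool, Wt p η := by
        rw [Finset.sum_mul, Finset.mul_sum, ← Finset.sum_add_distrib]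
        exact Finset.sum_congr rfl fun η _ => by ring
    _ = 2 * θ * (1 - θ) := by
        rw [hθf, Wt_sum_one]
        ring

end InfluenceId
section Bookkeep

open Finset

variable {d : ℕ} {p : ℝ}

lemma kernel_sum_le (hp : p ∈ Set.Icc (0:ℝ) 1) {n m : ℕ} (hn : 1 ≤ n) (hm : m ≤ n) :
    ∑ k ∈ Finset.Icc 1 n, theta d p (((k : ℤ) - (m : ℤ)).natAbs)
      ≤ 2 * ∑ j ∈ Finset.range n, theta d p j := by
  have hθnn : ∀ j, (0:ℝ) ≤ theta d p j := theta_nonneg hp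
  have hS0 : (0:ℝ) ≤ ∑ j ∈ Finset.range n, theta d p j :=
    Finset.sum_nonneg fun j _ => hθnn j
  by_cases hm0 : m = 0
  · subst hm0
    have hsplit : Finset.Icc 1 n = insert n (Finset.Icc 1 (n-1)) := by
      ext a; simp only [Finset.mem_Icc, Finset.mem_insert]; omega
    have hrange : Finset.range n = insert 0 (Finset.Icc 1 (n-1)) := by
      ext a; simp only [Finset.mem_range, Finset.mem_Icc, Finset.mem_insert]; omega
    have hnot1 : n ∉ Finset.Icc 1 (n-1) := by
      simp only [Finset.mem_Icc]; omega
    have hnot2 : 0 ∉ Finset.Icc 1 (n-1) := by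
      simp only [Finset.mem_Icc]; omega
    have hcongr : ∑ k ∈ Finset.Icc 1 n, theta d p (((k : ℤ) - ((0:ℕ) : ℤ)).natAbs)
        = ∑ k ∈ Finset.Icc 1 n, theta d p k := by
      refine Finset.sum_congr rfl fun a _ => ?_
      congr 1
    rw [hcongr, hsplit, Finset.sum_insert hnot1]
    have hrhs : ∑ j ∈ Finset.range n, theta d p j
        = theta d p 0 + ∑ j ∈ Finset.Icc 1 (n-1), theta d p j := by
      rw [hrange, Finset.sum_insert hnot2]
    have h1 : theta d p n ≤ theta d p 0 := by
      rw [theta_zero hp]; exact theta_le_one hp n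
    rw [hrhs] at hS0 ⊢
    linarith
  · -- m ≥ 1
    have hm1 : 1 ≤ m := by omega
    rw [← Finset.sum_filter_add_sum_filter_not (Finset.Icc 1 n) (fun k => k ≤ m)]
    have hpart1 : ∑ k ∈ (Finset.Icc 1 n).filter (fun k => k ≤ m),
        theta d p (((k : ℤ) - (m : ℤ)).natAbs) ≤ ∑ j ∈ Finset.range n, theta d p j := by
      have hc : ∀ k ∈ (Finset.Icc 1 n).filter (fun k => k ≤ m),
          theta d p (((k : ℤ) - (m : ℤ)).natAbs) = theta d p (m - k) := by
        intro a ha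
        rw [Finset.mem_filter, Finset.mem_Icc] at ha
        congr 1
        omega
      rw [Finset.sum_congr rfl hc]
      have hinj : Set.InjOn (fun k => m - k) ((Finset.Icc 1 n).filter (fun k => k ≤ m)) := by
        intro a ha b hb hab
        rw [Finset.coe_filter] at ha hb
        simp only [Finset.mem_Icc, Set.mem_setOf_eq] at ha hb
        simp only at hab
        omega
      rw [← Finset.sum_image hinj]
      refine Finset.sum_le_sum_of_subset_of_nonneg ?_ (fun j _ _ => hθnn j)
      intro j hj
      rw [Finset.mem_image] at hj
      obtain ⟨a, ha, rfl⟩ := hj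
      rw [Finset.mem_filter, Finset.mem_Icc] at ha
      rw [Finset.mem_range]
      omega
    have hpart2 : ∑ k ∈ (Finset.Icc 1 n).filter (fun k => ¬ k ≤ m),
        theta d p (((k : ℤ) - (m : ℤ)).natAbs) ≤ ∑ j ∈ Finset.range n, theta d p j := by
      have hc : ∀ k ∈ (Finset.Icc 1 n).filter (fun k => ¬ k ≤ m),
          theta d p (((k : ℤ) - (m : ℤ)).natAbs) = theta d p (k - m) := by
        intro a ha
        rw [Finset.mem_filter, Finset.mem_Icc] at ha
        congr 1
        omega
      rw [Finset.sum_congr rfl hc]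
      have hinj : Set.InjOn (fun k => k - m) ((Finset.Icc 1 n).filter (fun k => ¬ k ≤ m)) := by
        intro a ha b hb hab
        rw [Finset.coe_filter] at ha hb
        simp only [Finset.mem_Icc, Set.mem_setOf_eq] at ha hb
        simp only at hab
        omega
      rw [← Finset.sum_image hinj]
      refine Finset.sum_le_sum_of_subset_of_nonneg ?_ (fun j _ _ => hθnn j)
      intro j hj
      rw [Finset.mem_image] at hj
      obtain ⟨a, ha, rfl⟩ := hj
      rw [Finset.mem_filter, Finset.mem_Icc] at ha
      rw [Finset.mem_range]
      omega
    linarith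

lemma boxEdges_norms {n : ℕ} {e : PEdge d} (he : e ∈ boxEdges d n) :
    supNorm e.1 ≤ n ∧ supNorm (e.1 + unitVec d e.2) ≤ n := by
  unfold boxEdges edgesIn at he
  rw [Finset.mem_filter, Finset.mem_product] at he
  exact ⟨mem_boxF_iff.mp he.1.1, mem_boxF_iff.mp he.2⟩

end Bookkeep

/-- **Influence lower bound via the OSSS inequality.**  For Bernoulli bond percolation
on `ℤ^d` at `p ∈ (0,1)` and every `n ≥ 1`,
`Σ_{e ∈ E_n} Inf_e[𝟙_{0 ↔ ∂Λ_n}] ≥ (n / S_n)·θ_n(1 − θ_n)`,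
where `E_n` is the set of edges with both endpoints in `Λ_n`, `θ_k = ℙ_p[0 ↔ ∂Λ_k]`
(`θ_0 = 1`) and `S_n = Σ_{k=0}^{n−1} θ_k`. -/
theorem influence_sum_lower_bound (d : ℕ) (hd : 1 ≤ d) (p : ℝ)
    (hp : p ∈ Set.Ioo (0 : ℝ) 1) (n : ℕ) (hn : 1 ≤ n) :
    ((n : ℝ) / ∑ k ∈ Finset.range n, theta d p k) *
        (theta d p n * (1 - theta d p n)) ≤
      ∑ e ∈ boxEdges d n, cylInfluence d p (boxEdges d n) (zeroToBoundary d n) e := by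
  classical
  obtain ⟨hp0, hp1⟩ := hp
  have hpI : p ∈ Set.Icc (0:ℝ) 1 := ⟨le_of_lt hp0, le_of_lt hp1⟩
  set S := ∑ k ∈ Finset.range n, theta d p k with hS
  set T := ∑ e ∈ boxEdges d n, cylInfluence d p (boxEdges d n) (zeroToBoundary d n) e with hT
  set θ := theta d p n with hθdef
  have hθnn : ∀ j : ℕ, (0:ℝ) ≤ theta d p j := fun j => theta_nonneg hpI j
  have hS1 : (1:ℝ) ≤ S := by
    have h0mem : (0:ℕ) ∈ Finset.range n := Finset.mem_range.mpr (by omega)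
    have hle : theta d p 0 ≤ ∑ x ∈ Finset.range n, theta d p x :=
      Finset.single_le_sum (f := fun j => theta d p j) (fun j _ => hθnn j) h0mem
    rw [theta_zero hpI] at hle
    exact hle
  have hSpos : (0:ℝ) < S := lt_of_lt_of_le zero_lt_one hS1
  set Inf : {e // e ∈ boxEdges d n} → ℝ :=
    fun i => cylInfluence d p (boxEdges d n) (zeroToBoundary d n) i.val with hInf
  have hInfnn : ∀ i, 0 ≤ Inf i := fun i => influence_nonneg hpI i
  have hT' : T = ∑ i : {e // e ∈ boxEdges d n}, Inf i := by
    rw [hT, hInf]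
    exact (Finset.sum_coe_sort (boxEdges d n)
      (cylInfluence d p (boxEdges d n) (zeroToBoundary d n))).symm
  have hTnn : (0:ℝ) ≤ T := by
    rw [hT']
    exact Finset.sum_nonneg fun i _ => hInfnn i
  set Tk : ℕ → DT {e // e ∈ boxEdges d n} :=
    fun k => explore d n k (Fintype.card {e // e ∈ boxEdges d n}) ∅ (fun _ => false) with hTk
  have hk : ∀ k ∈ Finset.Icc 1 n,
      2 * θ * (1 - θ)
        ≤ 2 * (p * (1 - p)) * ∑ i : {e // e ∈ boxEdges d n}, revd p (Tk k) i * Inf i := by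
    intro k hkmem
    obtain ⟨hk1, hkn⟩ := Finset.mem_Icc.mp hkmem
    have heval : (Tk k).eval = fB d n := by
      funext η
      refine explore_eval hkn _ ∅ _ η ?_ (by simp)
      rw [Finset.sdiff_empty, Finset.card_univ]
    have hosss := osss hpI (Tk k) (fB d n) heval
    rw [DD_eq hpI] at hosss
    refine le_trans hosss ?_
    rw [Finset.mul_sum]
    refine Finset.sum_le_sum fun i _ => ?_
    rw [hInf]
    rw [rInf_eq_influence hpI i]
    exact le_of_eq (by ring)
  have hrev : ∀ i : {e // e ∈ boxEdges d n},
      ∑ k ∈ Finset.Icc 1 n, revd p (Tk k) i ≤ 4 * S := by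
    intro i
    obtain ⟨hx, hy⟩ := boxEdges_norms i.prop
    calc ∑ k ∈ Finset.Icc 1 n, revd p (Tk k) i
        ≤ ∑ k ∈ Finset.Icc 1 n,
            (theta d p (((k : ℤ) - (supNorm i.val.1 : ℤ)).natAbs)
              + theta d p (((k : ℤ) - (supNorm (i.val.1 + unitVec d i.val.2) : ℤ)).natAbs)) :=
          Finset.sum_le_sum fun k _ => revd_explore_le ⟨hp0, hp1⟩ _ i
      _ = (∑ k ∈ Finset.Icc 1 n, theta d p (((k : ℤ) - (supNorm i.val.1 : ℤ)).natAbs))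
          + ∑ k ∈ Finset.Icc 1 n,
              theta d p (((k : ℤ) - (supNorm (i.val.1 + unitVec d i.val.2) : ℤ)).natAbs) :=
          Finset.sum_add_distrib
      _ ≤ 2 * S + 2 * S := add_le_add (kernel_sum_le hpI hn hx) (kernel_sum_le hpI hn hy)
      _ = 4 * S := by ring
  have hTsum : ∑ i : {e // e ∈ boxEdges d n},
      (∑ k ∈ Finset.Icc 1 n, revd p (Tk k) i) * Inf i ≤ (4 * S) * T := by
    rw [hT', Finset.mul_sum]
    refine Finset.sum_le_sum fun i _ => ?_
    exact mul_le_mul_of_nonneg_right (hrev i) (hInfnn i)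
  have hswap : ∑ k ∈ Finset.Icc 1 n,
        2 * (p * (1 - p)) * ∑ i : {e // e ∈ boxEdges d n}, revd p (Tk k) i * Inf i
      = 2 * (p * (1 - p)) * ∑ i : {e // e ∈ boxEdges d n},
          (∑ k ∈ Finset.Icc 1 n, revd p (Tk k) i) * Inf i := by
    rw [← Finset.mul_sum]
    congr 1
    rw [Finset.sum_comm]
    refine Finset.sum_congr rfl fun i _ => ?_
    rw [Finset.sum_mul]
  have hmain : (n:ℝ) * (2 * θ * (1 - θ)) ≤ 2 * (p * (1 - p)) * (4 * S) * T := by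
    calc (n:ℝ) * (2 * θ * (1 - θ))
        = ∑ _k ∈ Finset.Icc 1 n, 2 * θ * (1 - θ) := by
          rw [Finset.sum_const, Nat.card_Icc, Nat.add_sub_cancel, nsmul_eq_mul]
      _ ≤ ∑ k ∈ Finset.Icc 1 n,
            2 * (p * (1 - p)) * ∑ i : {e // e ∈ boxEdges d n}, revd p (Tk k) i * Inf i :=
          Finset.sum_le_sum hk
      _ = 2 * (p * (1 - p)) * ∑ i : {e // e ∈ boxEdges d n},
            (∑ k ∈ Finset.Icc 1 n, revd p (Tk k) i) * Inf i := hswap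
      _ ≤ 2 * (p * (1 - p)) * ((4 * S) * T) := by
          refine mul_le_mul_of_nonneg_left hTsum ?_
          nlinarith
      _ = 2 * (p * (1 - p)) * (4 * S) * T := by ring
  have hpq : p * (1 - p) ≤ 1/4 := by nlinarith [sq_nonneg (2*p - 1)]
  have hST : (0:ℝ) ≤ S * T := mul_nonneg hSpos.le hTnn
  have h2 : (n:ℝ) * (2 * θ * (1 - θ)) ≤ 2 * (S * T) := by
    nlinarith [hmain, hST, hpq]
  rw [div_mul_eq_mul_div, div_le_iff₀ hSpos]
  nlinarith [h2]
end OSSSCore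
end
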